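/- arXiv:1509.00863 — 3 statements merged into one kernel-verified Lean document; each statement's English description precedes it below -/
import Mathlib

section
/- Let a be weakly degenerate at x₀ ∈ (0,1). Then for every u ∈ H²_a(0,1) with u'(0) = u'(1) = 0 and every v ∈ H¹_a(0,1), one has ∫₀¹ (a u')'(x) v(x) dx = − ∫₀¹ a(x) u'(x) v'(x) dx. -/
open MeasureTheory Set Filter

noncomputable section

/-- Absolute continuity of `u` on `[c,d]`, encoded via the fundamental theorem of calculus
with an integrable derivative. -/
def ACOn (u : ℝ → ℝ) (c d : ℝ) : Prop :=
  IntervalIntegrable (deriv u) volume c d ∧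
    ∀ x ∈ Icc c d, u x = u c + ∫ t in c..x, deriv u t

/-- Membership in `H¹(0,1)`. -/
def MemH1 (u : ℝ → ℝ) : Prop :=
  ACOn u 0 1 ∧ IntegrableOn (fun x => (u x)^2) (Ioo 0 1) ∧
    IntegrableOn (fun x => (deriv u x)^2) (Ioo 0 1)

/-- `a ∈ W^{1,1}(0,1)`. -/
def W11 (a : ℝ → ℝ) : Prop := ACOn a 0 1

/-- `a ∈ W^{1,∞}(0,1)`. -/
def W1infty (a : ℝ → ℝ) : Prop :=
  ACOn a 0 1 ∧ ∃ M : ℝ, ∀ᵐ x ∂(volume.restrict (Icc (0:ℝ) 1)), |deriv a x| ≤ M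

/-- Common part of the degeneracy conditions at `x₀` with constant `K`. -/
def DegAt (a : ℝ → ℝ) (x₀ K : ℝ) : Prop :=
  x₀ ∈ Ioo (0:ℝ) 1 ∧ a x₀ = 0 ∧ (∀ x ∈ Icc (0:ℝ) 1, x ≠ x₀ → 0 < a x) ∧
    ∀ᵐ x ∂(volume.restrict (Icc (0:ℝ) 1)), (x - x₀) * deriv a x ≤ K * a x

/-- `a` is weakly degenerate at `x₀` with constant `K`. -/
def WeaklyDeg (a : ℝ → ℝ) (x₀ K : ℝ) : Prop :=
  DegAt a x₀ K ∧ W11 a ∧ K ∈ Ioo (0:ℝ) 1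

/-- `a` is strongly degenerate at `x₀` with constant `K`. -/
def StronglyDeg (a : ℝ → ℝ) (x₀ K : ℝ) : Prop :=
  DegAt a x₀ K ∧ W1infty a ∧ K ∈ Ico (1:ℝ) 2

/-- Weakly (`wk = true`) or strongly (`wk = false`) degenerate. -/
def Deg (a : ℝ → ℝ) (x₀ K : ℝ) (wk : Bool) : Prop :=
  cond wk (WeaklyDeg a x₀ K) (StronglyDeg a x₀ K)

/-- `H¹_a(0,1)` in the weakly degenerate case: absolutely continuous on `[0,1]`
with `√a · u' ∈ L²(0,1)`. -/
def MemH1aWeak (a u : ℝ → ℝ) : Prop :=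
  ACOn u 0 1 ∧ IntegrableOn (fun x => a x * (deriv u x)^2) (Ioo 0 1)

/-- Locally absolutely continuous on `[0,x₀) ∪ (x₀,1]`. -/
def LocACAway (u : ℝ → ℝ) (x₀ : ℝ) : Prop :=
  (∀ c d : ℝ, 0 ≤ c → c ≤ d → d < x₀ → ACOn u c d) ∧
  (∀ c d : ℝ, x₀ < c → c ≤ d → d ≤ 1 → ACOn u c d)

/-- `H¹_a(0,1)` in the strongly degenerate case. -/
def MemH1aStrong (a u : ℝ → ℝ) (x₀ : ℝ) : Prop :=
  IntegrableOn (fun x => (u x)^2) (Ioo 0 1) ∧ LocACAway u x₀ ∧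
    IntegrableOn (fun x => a x * (deriv u x)^2) (Ioo 0 1)

/-- `H¹_a(0,1)`, weak (`wk = true`) or strong (`wk = false`) version. -/
def MemH1a (a u : ℝ → ℝ) (x₀ : ℝ) (wk : Bool) : Prop :=
  cond wk (MemH1aWeak a u) (MemH1aStrong a u x₀)

/-- `H²_a(0,1) = {u ∈ H¹_a(0,1) : a u' ∈ H¹(0,1)}`. -/
def MemH2a (a u : ℝ → ℝ) (x₀ : ℝ) (wk : Bool) : Prop :=
  MemH1a a u x₀ wk ∧ ACOn (fun x => a x * deriv u x) 0 1 ∧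
    IntegrableOn (fun x => (deriv (fun y => a y * deriv u y) x)^2) (Ioo 0 1)

/-- `D(A₁) = {u ∈ H²_a(0,1) : u'(0) = u'(1) = 0}`. -/
def MemDA1 (a u : ℝ → ℝ) (x₀ : ℝ) (wk : Bool) : Prop :=
  MemH2a a u x₀ wk ∧ deriv u 0 = 0 ∧ deriv u 1 = 0

/-- `L²_{1/a}(0,1)`. -/
def MemL2inva (a u : ℝ → ℝ) : Prop :=
  IntegrableOn (fun x => (u x)^2) (Ioo 0 1) ∧
    IntegrableOn (fun x => (u x)^2 / a x) (Ioo 0 1)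

/-- `H¹_{1/a}(0,1) = L²_{1/a}(0,1) ∩ H¹(0,1)`. -/
def MemH1inva (a u : ℝ → ℝ) : Prop :=
  MemL2inva a u ∧ ACOn u 0 1 ∧ IntegrableOn (fun x => (deriv u x)^2) (Ioo 0 1)

/-- `H²_{1/a}(0,1) = {u ∈ H¹_{1/a}(0,1) : u' ∈ H¹(0,1)}` (then `a u'' ∈ L²_{1/a}`). -/
def MemH2inva (a u : ℝ → ℝ) : Prop :=
  MemH1inva a u ∧ ACOn (deriv u) 0 1 ∧
    IntegrableOn (fun x => a x * (deriv (deriv u) x)^2) (Ioo 0 1)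

/-- `D(A₂) = {u ∈ H²_{1/a}(0,1) : u'(0) = u'(1) = 0}`. -/
def MemDA2 (a u : ℝ → ℝ) : Prop :=
  MemH2inva a u ∧ deriv u 0 = 0 ∧ deriv u 1 = 0

/-- The time weight `Θ(t) = 1/(t(T-t))⁴`. -/
def Theta (T t : ℝ) : ℝ := 1 / (t * (T - t))^4

/-- The space weight `ψ(x) = c₁ (∫_{x₀}^x (y-x₀)/a(y) dy − c₂)`. -/
def psiW (a : ℝ → ℝ) (x₀ c₁ c₂ x : ℝ) : ℝ :=
  c₁ * ((∫ y in x₀..x, (y - x₀) / a y) - c₂)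

/-- The weight `φ(t,x) = Θ(t) ψ(x)`. -/
def phiW (a : ℝ → ℝ) (x₀ c₁ c₂ T t x : ℝ) : ℝ := Theta T t * psiW a x₀ c₁ c₂ x

/-- The space weight `μ(x) = d₁ (∫_{x₀}^x (y-x₀)e^{R(y-x₀)²}/a(y) dy − d₂)`. -/
def muW (a : ℝ → ℝ) (x₀ d₁ d₂ R x : ℝ) : ℝ :=
  d₁ * ((∫ y in x₀..x, (y - x₀) * Real.exp (R * (y - x₀)^2) / a y) - d₂)

/-- The weight `γ(t,x) = Θ(t) μ(x)`. -/
def gammaW (a : ℝ → ℝ) (x₀ d₁ d₂ R T t x : ℝ) : ℝ := Theta T t * muW a x₀ d₁ d₂ R x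

/-- Hypotheses (A) of the divergence-form Carleman estimate. -/
def HypA (a : ℝ → ℝ) (x₀ K : ℝ) (wk : Bool) : Prop :=
  cond wk
    (WeaklyDeg a x₀ K ∧ ContDiffOn ℝ 1 a (Icc 0 1 \ {x₀}))
    (StronglyDeg a x₀ K ∧
      (4/3 < K → ∃ ϑ, ϑ ∈ Ioc (0:ℝ) K ∧
        AntitoneOn (fun x => a x / |x - x₀| ^ ϑ) (Ico 0 x₀) ∧
        MonotoneOn (fun x => a x / |x - x₀| ^ ϑ) (Ioc x₀ 1) ∧
        (3/2 < K →
          (∃ ε > 0, ∀ x ∈ Icc (0:ℝ) 1, x ≠ x₀ → ε ≤ a x / |x - x₀| ^ ϑ) ∧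
          ∃ S > 0, ∀ᵐ x ∂(volume.restrict (Icc (0:ℝ) 1)),
            |deriv a x| ≤ S * |x - x₀| ^ (2*ϑ - 3))))

/-- Hypotheses (B) of the non-divergence-form Carleman estimate. -/
def HypB (a : ℝ → ℝ) (x₀ K : ℝ) (wk : Bool) : Prop :=
  Deg a x₀ K wk ∧
  (∃ L : NNReal, LipschitzOnWith L (fun x => (x - x₀) * deriv a x / a x) (Icc 0 1)) ∧
  (1/2 ≤ K → ∃ ϑ, ϑ ∈ Ioc (0:ℝ) K ∧
      AntitoneOn (fun x => a x / |x - x₀| ^ ϑ) (Ico 0 x₀) ∧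
      MonotoneOn (fun x => a x / |x - x₀| ^ ϑ) (Ioc x₀ 1))

/-- `g ∈ L^∞_loc([0,1] ∖ {x₀})`. -/
def LocBddAway (g : ℝ → ℝ) (x₀ : ℝ) : Prop :=
  ∀ c d : ℝ, Icc c d ⊆ Icc (0:ℝ) 1 \ {x₀} →
    ∃ M : ℝ, ∀ x ∈ Icc c d, |g x| ≤ M

/-- `h ∈ W^{1,∞}_loc([0,1] ∖ {x₀}; L^∞(0,1))`. -/
def LocW1inftyAway (h : ℝ → ℝ → ℝ) (x₀ : ℝ) : Prop :=
  ∀ c d : ℝ, Icc c d ⊆ Icc (0:ℝ) 1 \ {x₀} →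
    (∃ M : ℝ, ∀ x ∈ Icc c d, ∀ B ∈ Icc (0:ℝ) 1, |h x B| ≤ M) ∧
    ∃ L : NNReal, ∀ B ∈ Icc (0:ℝ) 1, LipschitzOnWith L (fun x => h x B) (Icc c d)

/-- Hypothesis (O) (with `σ = -1`) resp. (O') (with `σ = 1`):
`σ (a'/(2√a))(∫ₓᴮ g + h₀) + √a g = h(x,B)` for a.e. `x` and all admissible `B`. -/
def HypOgen (σ : ℝ) (a g : ℝ → ℝ) (h : ℝ → ℝ → ℝ) (g₀ h₀ x₀ : ℝ) : Prop :=
  0 < g₀ ∧ 0 < h₀ ∧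
  (∀ᵐ x ∂(volume.restrict (Icc (0:ℝ) 1)), g₀ ≤ g x) ∧
  LocBddAway g x₀ ∧ LocW1inftyAway h x₀ ∧
  ∀ᵐ x ∂(volume.restrict (Icc (0:ℝ) 1)), ∀ B ∈ Icc (0:ℝ) 1,
    ((x < B ∧ B < x₀) ∨ (x₀ < x ∧ x < B)) →
      σ * (deriv a x / (2 * Real.sqrt (a x))) * ((∫ t in x..B, g t) + h₀)
        + Real.sqrt (a x) * g x = h x B

/-- The space-time cylinder `Q_T = (0,T) × (0,1)`. -/
def QT (T : ℝ) : Set (ℝ × ℝ) := Ioo 0 T ×ˢ Ioo (0:ℝ) 1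

/-- The class `𝒱 = L²(0,T; D(A₁)) ∩ H¹(0,T; H¹_a(0,1))`. -/
def InClassV (a : ℝ → ℝ) (x₀ T : ℝ) (wk : Bool) (v : ℝ → ℝ → ℝ) : Prop :=
  (∀ t ∈ Ioo (0:ℝ) T, MemDA1 a (v t) x₀ wk) ∧
  IntegrableOn (fun p : ℝ × ℝ =>
    (v p.1 p.2)^2 + a p.2 * (deriv (v p.1) p.2)^2
      + (deriv (fun y => a y * deriv (v p.1) y) p.2)^2) (QT T) ∧
  IntegrableOn (fun p : ℝ × ℝ =>
    (deriv (fun τ => v τ p.2) p.1)^2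
      + a p.2 * (deriv (fun y => deriv (fun τ => v τ y) p.1) p.2)^2) (QT T)

/-- The class `𝒮 = H¹(0,T; H¹_{1/a}(0,1)) ∩ L²(0,T; H²_{1/a}(0,1))`. -/
def InClassS (a : ℝ → ℝ) (T : ℝ) (v : ℝ → ℝ → ℝ) : Prop :=
  (∀ t ∈ Ioo (0:ℝ) T, MemH2inva a (v t)) ∧
  IntegrableOn (fun p : ℝ × ℝ =>
    (v p.1 p.2)^2 / a p.2 + (deriv (v p.1) p.2)^2
      + a p.2 * (deriv (deriv (v p.1)) p.2)^2) (QT T) ∧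
  IntegrableOn (fun p : ℝ × ℝ =>
    (deriv (fun τ => v τ p.2) p.1)^2 / a p.2
      + (deriv (fun y => deriv (fun τ => v τ y) p.1) p.2)^2) (QT T)

/-- Neumann boundary conditions `v_x(t,0) = v_x(t,1) = 0` for `t ∈ (0,T)`. -/
def NeumannBC (T : ℝ) (v : ℝ → ℝ → ℝ) : Prop :=
  ∀ t ∈ Ioo (0:ℝ) T, deriv (v t) 0 = 0 ∧ deriv (v t) 1 = 0

/-- The equation `v_t + (a v_x)_x = h` in `Q_T`. -/
def SolDiv (a : ℝ → ℝ) (T : ℝ) (v h : ℝ → ℝ → ℝ) : Prop :=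
  ∀ t ∈ Ioo (0:ℝ) T, ∀ x ∈ Ioo (0:ℝ) 1,
    deriv (fun τ => v τ x) t + deriv (fun y => a y * deriv (v t) y) x = h t x

/-- The equation `v_t + a v_xx = h` in `Q_T`. -/
def SolNonDiv (a : ℝ → ℝ) (T : ℝ) (v h : ℝ → ℝ → ℝ) : Prop :=
  ∀ t ∈ Ioo (0:ℝ) T, ∀ x ∈ Ioo (0:ℝ) 1,
    deriv (fun τ => v τ x) t + a x * deriv (deriv (v t)) x = h t x

/-- Test function class `H¹(0,T; L²(0,1)) ∩ L²(0,T; H¹_a(0,1))` for the weak formulation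
in divergence form. -/
def TestClassDiv (a : ℝ → ℝ) (x₀ T : ℝ) (wk : Bool) (φ : ℝ → ℝ → ℝ) : Prop :=
  (∀ t ∈ Icc (0:ℝ) T, MemH1a a (φ t) x₀ wk) ∧
  IntegrableOn (fun p : ℝ × ℝ =>
    (φ p.1 p.2)^2 + a p.2 * (deriv (φ p.1) p.2)^2
      + (deriv (fun τ => φ τ p.2) p.1)^2) (QT T)

/-- Weak solution of `v_t + (a v_x)_x = 0` with Neumann boundary conditions. -/
def WeakSolDiv (a : ℝ → ℝ) (x₀ T : ℝ) (wk : Bool) (v : ℝ → ℝ → ℝ) : Prop :=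
  (∀ t ∈ Icc (0:ℝ) T, MemH1a a (v t) x₀ wk) ∧
  IntegrableOn (fun p : ℝ × ℝ =>
    (v p.1 p.2)^2 + a p.2 * (deriv (v p.1) p.2)^2) (QT T) ∧
  ∀ φ : ℝ → ℝ → ℝ, TestClassDiv a x₀ T wk φ →
    (∫ x in Ioo (0:ℝ) 1, v T x * φ T x) - (∫ x in Ioo (0:ℝ) 1, v 0 x * φ 0 x)
      - (∫ t in Ioo (0:ℝ) T, ∫ x in Ioo (0:ℝ) 1, v t x * deriv (fun τ => φ τ x) t)
      = ∫ t in Ioo (0:ℝ) T, ∫ x in Ioo (0:ℝ) 1, a x * deriv (v t) x * deriv (φ t) x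

/-- Test function class `H¹(0,T; L²_{1/a}(0,1)) ∩ L²(0,T; H¹_{1/a}(0,1))` for the weak
formulation in non-divergence form. -/
def TestClassNonDiv (a : ℝ → ℝ) (T : ℝ) (φ : ℝ → ℝ → ℝ) : Prop :=
  (∀ t ∈ Icc (0:ℝ) T, MemH1inva a (φ t)) ∧
  IntegrableOn (fun p : ℝ × ℝ =>
    (φ p.1 p.2)^2 / a p.2 + (deriv (φ p.1) p.2)^2
      + (deriv (fun τ => φ τ p.2) p.1)^2 / a p.2) (QT T)

/-- Weak solution of `v_t + a v_xx = 0` with Neumann boundary conditions. -/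
def WeakSolNonDiv (a : ℝ → ℝ) (T : ℝ) (v : ℝ → ℝ → ℝ) : Prop :=
  (∀ t ∈ Icc (0:ℝ) T, MemH1inva a (v t)) ∧
  IntegrableOn (fun p : ℝ × ℝ =>
    (v p.1 p.2)^2 / a p.2 + (deriv (v p.1) p.2)^2) (QT T) ∧
  ∀ φ : ℝ → ℝ → ℝ, TestClassNonDiv a T φ →
    (∫ x in Ioo (0:ℝ) 1, v T x * φ T x / a x) - (∫ x in Ioo (0:ℝ) 1, v 0 x * φ 0 x / a x)
      - (∫ t in Ioo (0:ℝ) T, ∫ x in Ioo (0:ℝ) 1, v t x * deriv (fun τ => φ τ x) t / a x)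
      = ∫ t in Ioo (0:ℝ) T, ∫ x in Ioo (0:ℝ) 1, deriv (v t) x * deriv (φ t) x

end
lemma key_swap (f g : ℝ → ℝ) (hf : IntegrableOn f (Ioo 0 1)) (hg : IntegrableOn g (Ioo 0 1)) :
    (∫ x in Ioo (0:ℝ) 1, f x * ∫ y in Ioo 0 x, g y)
      = ∫ y in Ioo (0:ℝ) 1, (∫ x in Ioo y 1, f x) * g y := by
  set μ := volume.restrict (Ioo (0:ℝ) 1)
  set T : Set (ℝ × ℝ) := {p : ℝ × ℝ | 0 < p.2 ∧ p.2 < p.1} with hT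
  have hTmeas : MeasurableSet T := by
    apply MeasurableSet.inter
    · exact measurableSet_lt measurable_const measurable_snd
    · exact measurableSet_lt measurable_snd measurable_fst
  set H : ℝ × ℝ → ℝ := T.indicator (fun p => f p.1 * g p.2) with hH
  have hint : Integrable H (μ.prod μ) := by
    exact (Integrable.mul_prod hf hg).indicator hTmeas
  have huncurry : Integrable (Function.uncurry (fun x y => H (x, y))) (μ.prod μ) := by
    exact hint
  have hswap := MeasureTheory.integral_integral_swap huncurry
  have hL : (∫ x, ∫ y, H (x, y) ∂μ ∂μ) = ∫ x in Ioo (0:ℝ) 1, f x * ∫ y in Ioo 0 x, g y := by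
    apply setIntegral_congr_fun measurableSet_Ioo
    intro x hx
    have h1 : ∀ y : ℝ, H (x, y) = (Ioo (0:ℝ) x).indicator (fun y => f x * g y) y := by
      intro y
      simp only [hH, hT, indicator, mem_setOf_eq, mem_Ioo]
    simp only [h1]
    rw [integral_indicator measurableSet_Ioo, Measure.restrict_restrict measurableSet_Ioo]
    have : Ioo (0:ℝ) x ∩ Ioo 0 1 = Ioo 0 x :=
      inter_eq_self_of_subset_left (Ioo_subset_Ioo le_rfl hx.2.le)
    rw [this, integral_const_mul]
  have hR : (∫ y, ∫ x, H (x, y) ∂μ ∂μ) = ∫ y in Ioo (0:ℝ) 1, (∫ x in Ioo y 1, f x) * g y := by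
    apply setIntegral_congr_fun measurableSet_Ioo
    intro y hy
    show (∫ x, H (x, y) ∂μ) = (∫ x in Ioo y 1, f x) * g y
    have h1 : ∀ᵐ x ∂μ, H (x, y) = (Ioi y).indicator (fun x => f x * g y) x := by
      filter_upwards [] with x
      simp only [hH, hT, indicator, mem_setOf_eq, mem_Ioi]
      by_cases h : y < x
      · simp [h, hy.1]
      · simp [h, fun hc : 0 < y ∧ y < x => h hc.2]
    rw [integral_congr_ae h1, integral_indicator measurableSet_Ioi,
      Measure.restrict_restrict measurableSet_Ioi]
    have : Ioi y ∩ Ioo 0 1 = Ioo y 1 := by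
      ext x; simp only [mem_inter_iff, mem_Ioi, mem_Ioo]
      constructor
      · rintro ⟨h1, _, h3⟩; exact ⟨h1, h3⟩
      · rintro ⟨h1, h2⟩; exact ⟨h1, hy.1.trans h1, h2⟩
    rw [this, integral_mul_const]
  rw [← hL, hswap, hR]


/-- Integration by parts formula, weakly degenerate case. -/
theorem statement0 (a : ℝ → ℝ) (x₀ : ℝ) (ha : ∃ K, WeaklyDeg a x₀ K)
    (u v : ℝ → ℝ) (hu : MemDA1 a u x₀ true) (hv : MemH1aWeak a v) :
    (∫ x in Ioo (0:ℝ) 1, deriv (fun y => a y * deriv u y) x * v x)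
      = - ∫ x in Ioo (0:ℝ) 1, a x * deriv u x * deriv v x := by
  obtain ⟨⟨-, hwAC, -⟩, hu0, hu1⟩ := hu
  obtain ⟨hvAC, -⟩ := hv
  set w : ℝ → ℝ := fun y => a y * deriv u y with hw
  set f : ℝ → ℝ := deriv w with hfdef
  set g : ℝ → ℝ := deriv v with hgdef
  obtain ⟨hfII, hwFTC⟩ := hwAC
  obtain ⟨hgII, hvFTC⟩ := hvAC
  have hw0 : w 0 = 0 := by simp [hw, hu0]
  have hw1 : w 1 = 0 := by simp [hw, hu1]
  -- basic conversions
  have hIoo : ∀ x : ℝ, 0 ≤ x → ∀ h : ℝ → ℝ, (∫ t in (0:ℝ)..x, h t) = ∫ t in Ioo 0 x, h t := by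
    intro x hx h
    rw [intervalIntegral.integral_of_le hx, integral_Ioc_eq_integral_Ioo]
  have hfInt : IntegrableOn f (Ioo 0 1) := hfII.1.mono_set Ioo_subset_Ioc_self
  have hgInt : IntegrableOn g (Ioo 0 1) := hgII.1.mono_set Ioo_subset_Ioc_self
  -- F and its key values
  have hF1 : (∫ t in (0:ℝ)..1, f t) = 0 := by
    have := hwFTC 1 (by norm_num)
    rw [hw1, hw0] at this; linarith
  have hFsplit : ∀ y ∈ Icc (0:ℝ) 1, (∫ x in Ioo y 1, f x) = -(w y) := by
    intro y hy
    have hadd : (∫ t in (0:ℝ)..y, f t) + (∫ t in y..(1:ℝ), f t) = ∫ t in (0:ℝ)..1, f t := by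
      apply intervalIntegral.integral_add_adjacent_intervals
      · apply hfII.mono_set
        rw [uIcc_of_le hy.1, uIcc_of_le (by norm_num : (0:ℝ) ≤ 1)]
        exact Icc_subset_Icc le_rfl hy.2
      · apply hfII.mono_set
        rw [uIcc_of_le hy.2, uIcc_of_le (by norm_num : (0:ℝ) ≤ 1)]
        exact Icc_subset_Icc hy.1 le_rfl
    have hwy := hwFTC y hy
    rw [hF1] at hadd
    rw [intervalIntegral.integral_of_le hy.2, integral_Ioc_eq_integral_Ioo] at hadd
    rw [hw0, zero_add] at hwy
    linarith [hadd, hwy]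
  -- continuity and bounds
  have hu01 : (uIcc (0:ℝ) 1) = Icc (0:ℝ) 1 := uIcc_of_le (by norm_num)
  have hvCont : ContinuousOn v (Icc 0 1) := by
    have h1 : ContinuousOn (fun x => v 0 + ∫ t in (0:ℝ)..x, g t) (Icc 0 1) := by
      apply ContinuousOn.add continuousOn_const
      have := intervalIntegral.continuousOn_primitive_interval'
        (μ := volume) (b₁ := (0:ℝ)) (b₂ := 1) (a := (0:ℝ)) hgII (by rw [hu01]; norm_num)
      rwa [hu01] at this
    exact h1.congr fun x hx => hvFTC x hx
  have hwCont : ContinuousOn w (Icc 0 1) := by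
    have h1 : ContinuousOn (fun x => w 0 + ∫ t in (0:ℝ)..x, f t) (Icc 0 1) := by
      apply ContinuousOn.add continuousOn_const
      have := intervalIntegral.continuousOn_primitive_interval'
        (μ := volume) (b₁ := (0:ℝ)) (b₂ := 1) (a := (0:ℝ)) hfII (by rw [hu01]; norm_num)
      rwa [hu01] at this
    exact h1.congr fun x hx => hwFTC x hx
  obtain ⟨Cv, hCv⟩ := (isCompact_Icc).exists_bound_of_continuousOn hvCont
  -- integrability of products
  have hvMeas : AEStronglyMeasurable v (volume.restrict (Ioo 0 1)) :=
    (hvCont.mono Ioo_subset_Icc_self).aestronglyMeasurable measurableSet_Ioo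
  have hfvInt : IntegrableOn (fun x => f x * v x) (Ioo 0 1) := by
    apply Integrable.mono' (hfInt.norm.mul_const Cv)
      (hfInt.aestronglyMeasurable.mul hvMeas)
    filter_upwards [ae_restrict_mem measurableSet_Ioo] with x hx
    simp only [Pi.mul_apply, Real.norm_eq_abs, abs_mul]
    exact mul_le_mul_of_nonneg_left (hCv x (Ioo_subset_Icc_self hx)) (abs_nonneg _)
  have hwgInt : IntegrableOn (fun x => w x * g x) (Ioo 0 1) := by
    obtain ⟨Cw, hCw⟩ := (isCompact_Icc).exists_bound_of_continuousOn hwCont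
    have hwMeas : AEStronglyMeasurable w (volume.restrict (Ioo 0 1)) :=
      (hwCont.mono Ioo_subset_Icc_self).aestronglyMeasurable measurableSet_Ioo
    apply Integrable.mono' (hgInt.norm.const_mul Cw)
      (hwMeas.mul hgInt.aestronglyMeasurable)
    filter_upwards [ae_restrict_mem measurableSet_Ioo] with x hx
    simp only [Pi.mul_apply, Real.norm_eq_abs, abs_mul]
    exact mul_le_mul_of_nonneg_right (hCw x (Ioo_subset_Icc_self hx)) (abs_nonneg _)
  have hfGInt : IntegrableOn (fun x => f x * ∫ y in Ioo (0:ℝ) x, g y) (Ioo 0 1) := by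
    apply IntegrableOn.congr_fun (hfvInt.sub (hfInt.mul_const (v 0))) _ measurableSet_Ioo
    intro x hx
    simp only [Pi.sub_apply]
    rw [← hIoo x hx.1.le g]
    have := hvFTC x (Ioo_subset_Icc_self hx)
    rw [this]; ring
  have step1 : (∫ x in Ioo (0:ℝ) 1, f x * v x)
      = (∫ x in Ioo (0:ℝ) 1, f x * v 0) + ∫ x in Ioo (0:ℝ) 1, f x * ∫ y in Ioo 0 x, g y := by
    rw [← integral_add (hfInt.mul_const (v 0)) hfGInt]
    apply setIntegral_congr_fun measurableSet_Ioo
    intro x hx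
    show f x * v x = f x * v 0 + f x * ∫ y in Ioo 0 x, g y
    rw [hvFTC x (Ioo_subset_Icc_self hx), hIoo x hx.1.le g]
    ring
  have step2 : (∫ x in Ioo (0:ℝ) 1, f x * v 0) = 0 := by
    rw [integral_mul_const, ← hIoo 1 (by norm_num) f, hF1, zero_mul]
  have step3 : (∫ x in Ioo (0:ℝ) 1, f x * ∫ y in Ioo 0 x, g y)
      = - ∫ x in Ioo (0:ℝ) 1, w x * g x := by
    rw [key_swap f g hfInt hgInt, ← integral_neg]
    apply setIntegral_congr_fun measurableSet_Ioo
    intro y hy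
    show (∫ x in Ioo y 1, f x) * g y = -(w y * g y)
    rw [hFsplit y (Ioo_subset_Icc_self hy)]
    ring
  show (∫ x in Ioo (0:ℝ) 1, f x * v x) = - ∫ x in Ioo (0:ℝ) 1, w x * g x
  rw [step1, step2, step3, zero_add]
end

section
/- Let a be strongly degenerate at x₀ ∈ (0,1). Then for every u ∈ H²_a(0,1) with u'(0) = u'(1) = 0 and every v ∈ H¹_a(0,1), one has ∫₀¹ (a u')'(x) v(x) dx = − ∫₀¹ a(x) u'(x) v'(x) dx. -/
open MeasureTheory Set Filter

noncomputable section

section Helpers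

open intervalIntegral

/-- Cauchy–Schwarz: integrability of product of two L² functions. -/
theorem cs_integrable {μ : Measure ℝ} {f g : ℝ → ℝ}
    (hfm : AEStronglyMeasurable f μ) (hgm : AEStronglyMeasurable g μ)
    (hf2 : Integrable (fun x => f x ^ 2) μ) (hg2 : Integrable (fun x => g x ^ 2) μ) :
    Integrable (fun x => f x * g x) μ := by
  have hf : MemLp f 2 μ := (memLp_two_iff_integrable_sq hfm).2 hf2
  have hg : MemLp g 2 μ := (memLp_two_iff_integrable_sq hgm).2 hg2
  have h : MemLp (f • g) 1 μ :=
    haveI : ENNReal.HolderTriple 2 2 1 := ENNReal.holderConjugate_iff.2 ENNReal.inv_two_add_inv_two; hg.smul hf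
  rw [← memLp_one_iff_integrable]
  exact h

/-- Cauchy–Schwarz inequality for real functions. -/
theorem cs_abs_le {μ : Measure ℝ} {f g : ℝ → ℝ}
    (hfm : AEStronglyMeasurable f μ) (hgm : AEStronglyMeasurable g μ)
    (hf2 : Integrable (fun x => f x ^ 2) μ) (hg2 : Integrable (fun x => g x ^ 2) μ) :
    ∫ x, |f x * g x| ∂μ ≤ Real.sqrt (∫ x, f x ^ 2 ∂μ) * Real.sqrt (∫ x, g x ^ 2 ∂μ) := by
  have hf : MemLp f (ENNReal.ofReal 2) μ := by
    rw [ENNReal.ofReal_ofNat]; exact (memLp_two_iff_integrable_sq hfm).2 hf2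
  have hg : MemLp g (ENNReal.ofReal 2) μ := by
    rw [ENNReal.ofReal_ofNat]; exact (memLp_two_iff_integrable_sq hgm).2 hg2
  have h22 : Real.HolderConjugate 2 2 := Real.holderConjugate_iff.2 ⟨one_lt_two, by norm_num⟩
  have H := integral_mul_norm_le_Lp_mul_Lq h22 hf hg
  have e1 : ∀ x:ℝ, ‖x‖ ^ (2:ℝ) = x ^ 2 := by
    intro x; rw [show (2:ℝ) = ((2:ℕ):ℝ) by norm_num, Real.rpow_natCast]; simp [sq_abs]
  simp only [e1] at H
  calc ∫ x, |f x * g x| ∂μ = ∫ x, ‖f x‖ * ‖g x‖ ∂μ := by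
        simp [abs_mul]
    _ ≤ (∫ x, f x ^ 2 ∂μ) ^ ((1:ℝ)/2) * (∫ x, g x ^ 2 ∂μ) ^ ((1:ℝ)/2) := H
    _ = _ := by
        rw [← Real.sqrt_eq_rpow, ← Real.sqrt_eq_rpow]

/-- Integration by parts for functions given by an FTC representation, via Fubini. -/
theorem ibp_ftc {F G f g : ℝ → ℝ} {c d : ℝ} (hcd : c ≤ d)
    (hF : IntegrableOn F (Ioc c d)) (hG : IntegrableOn G (Ioc c d))
    (hf : ∀ x ∈ Icc c d, f x = f c + ∫ t in Ioc c x, F t)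
    (hg : ∀ x ∈ Icc c d, g x = g c + ∫ t in Ioc c x, G t) :
    ∫ x in Ioc c d, (F x * g x + f x * G x) = f d * g d - f c * g c := by
  set μ := volume.restrict (Ioc c d) with hμ
  set S1 : ℝ × ℝ → ℝ := fun p => if p.2 ≤ p.1 then F p.1 * G p.2 else 0 with hS1def
  set S2 : ℝ × ℝ → ℝ := fun p => if p.1 < p.2 then F p.1 * G p.2 else 0 with hS2def
  have hΦ : Integrable (fun p : ℝ × ℝ => F p.1 * G p.2) (μ.prod μ) :=
    Integrable.mul_prod hF hG
  have hmeas1 : MeasurableSet {p : ℝ × ℝ | p.2 ≤ p.1} :=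
    measurableSet_le measurable_snd measurable_fst
  have hmeas2 : MeasurableSet {p : ℝ × ℝ | p.1 < p.2} :=
    measurableSet_lt measurable_fst measurable_snd
  have hS1 : Integrable S1 (μ.prod μ) := by
    have : S1 = {p : ℝ × ℝ | p.2 ≤ p.1}.indicator (fun p => F p.1 * G p.2) := by
      funext p; by_cases h : p.2 ≤ p.1 <;> simp [hS1def, h, Set.indicator_apply]
    rw [this]; exact hΦ.indicator hmeas1
  have hS2 : Integrable S2 (μ.prod μ) := by
    have : S2 = {p : ℝ × ℝ | p.1 < p.2}.indicator (fun p => F p.1 * G p.2) := by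
      funext p; by_cases h : p.1 < p.2 <;> simp [hS2def, h, Set.indicator_apply]
    rw [this]; exact hΦ.indicator hmeas2
  have hinner1 : ∀ x ∈ Ioc c d, (∫ t, S1 (x, t) ∂μ) = F x * ∫ t in Ioc c x, G t := by
    intro x hx
    have e1 : (fun t => S1 (x, t)) = (Iic x).indicator (fun t => F x * G t) := by
      funext t; by_cases h : t ≤ x <;> simp [hS1def, h, Set.indicator_apply]
    rw [e1, MeasureTheory.integral_indicator measurableSet_Iic, hμ,
      Measure.restrict_restrict measurableSet_Iic, Set.Iic_inter_Ioc_of_le hx.2,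
      MeasureTheory.integral_const_mul]
  have hinner2 : ∀ x ∈ Ioc c d, (∫ t, S2 (t, x) ∂μ) = (∫ t in Ioc c x, F t) * G x := by
    intro x hx
    have e1 : (fun t => S2 (t, x)) = (Iio x).indicator (fun t => F t * G x) := by
      funext t; by_cases h : t < x <;> simp [hS2def, h, Set.indicator_apply]
    have e2 : Iio x ∩ Ioc c d = Ioo c x := by
      ext t
      simp only [mem_inter_iff, mem_Iio, mem_Ioc, mem_Ioo]
      exact ⟨fun h => ⟨h.2.1, h.1⟩, fun h => ⟨h.2, h.1, h.2.le.trans hx.2⟩⟩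
    rw [e1, MeasureTheory.integral_indicator measurableSet_Iio, hμ,
      Measure.restrict_restrict measurableSet_Iio, e2, MeasureTheory.integral_mul_const,
      ← integral_Ioc_eq_integral_Ioo]
  have hA : Integrable (fun x => ∫ t, S1 (x, t) ∂μ) μ := hS1.integral_prod_left
  have hB : Integrable (fun x => ∫ t, S2 (t, x) ∂μ) μ := hS2.integral_prod_right
  have htri : (∫ x, (∫ t, S1 (x, t) ∂μ) ∂μ) + (∫ x, (∫ t, S2 (t, x) ∂μ) ∂μ)
      = (∫ x, F x ∂μ) * ∫ x, G x ∂μ := by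
    have h1 : (∫ x, (∫ t, S1 (x, t) ∂μ) ∂μ) = ∫ p, S1 p ∂(μ.prod μ) :=
      (integral_prod S1 hS1).symm
    have h2 : (∫ x, (∫ t, S2 (t, x) ∂μ) ∂μ) = ∫ p, S2 p ∂(μ.prod μ) := by
      rw [integral_prod S2 hS2]
      exact integral_integral_swap (f := fun x t => S2 (t, x)) hS2.swap
    rw [h1, h2, ← integral_add hS1 hS2]
    have : ∀ p : ℝ × ℝ, S1 p + S2 p = F p.1 * G p.2 := by
      intro p
      by_cases h : p.2 ≤ p.1
      · simp [hS1def, hS2def, h, not_lt.2 h]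
      · simp [hS1def, hS2def, h, lt_of_not_ge h]
    simp only [this]
    exact integral_prod_mul F G
  have hcongr : ∀ x ∈ Ioc c d,
      F x * g x + f x * G x
        = (F x * g c + f c * G x) + ((∫ t, S1 (x, t) ∂μ) + (∫ t, S2 (t, x) ∂μ)) := by
    intro x hx
    rw [hinner1 x hx, hinner2 x hx, hf x ⟨hx.1.le, hx.2⟩, hg x ⟨hx.1.le, hx.2⟩]
    ring
  have hint1 : Integrable (fun x => F x * g c + f c * G x) μ :=
    (hF.mul_const (g c)).add (hG.const_mul (f c))
  calc ∫ x in Ioc c d, (F x * g x + f x * G x)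
      = ∫ x, ((F x * g c + f c * G x) + ((∫ t, S1 (x, t) ∂μ) + (∫ t, S2 (t, x) ∂μ))) ∂μ := by
        refine setIntegral_congr_fun measurableSet_Ioc ?_
        intro x hx; exact hcongr x hx
    _ = (∫ x, (F x * g c + f c * G x) ∂μ)
        + ((∫ x, (∫ t, S1 (x, t) ∂μ) ∂μ) + (∫ x, (∫ t, S2 (t, x) ∂μ) ∂μ)) := by
        have hAB : Integrable (fun x => (∫ t, S1 (x, t) ∂μ) + (∫ t, S2 (t, x) ∂μ)) μ :=
          hA.add hB
        rw [integral_add hint1 hAB, integral_add hA hB]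
    _ = ((∫ x, F x ∂μ) * g c + f c * ∫ x, G x ∂μ)
        + (∫ x, F x ∂μ) * ∫ x, G x ∂μ := by
        rw [htri, integral_add (hF.mul_const (g c)) (hG.const_mul (f c)),
          MeasureTheory.integral_mul_const, MeasureTheory.integral_const_mul]
    _ = f d * g d - f c * g c := by
        have hfd := hf d ⟨hcd, le_rfl⟩
        have hgd := hg d ⟨hcd, le_rfl⟩
        have e1 : (∫ x, F x ∂μ) = f d - f c := by rw [hfd, hμ]; ring
        have e2 : (∫ x, G x ∂μ) = g d - g c := by rw [hgd, hμ]; ring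
        rw [e1, e2]; ring

theorem ACOn.rep_sub {f : ℝ → ℝ} {c d s x : ℝ} (h : ACOn f c d)
    (hs : s ∈ Icc c d) (hx : x ∈ Icc c d) :
    f x = f s + ∫ t in s..x, deriv f t := by
  have hcd : c ≤ d := hs.1.trans hs.2
  have hmem : ∀ y ∈ Icc c d, y ∈ Set.uIcc c d := by
    intro y hy; rw [uIcc_of_le hcd]; exact hy
  have hIs : IntervalIntegrable (deriv f) volume c s :=
    h.1.mono_set (uIcc_subset_uIcc left_mem_uIcc (hmem s hs))
  have hIsx : IntervalIntegrable (deriv f) volume s x :=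
    h.1.mono_set (uIcc_subset_uIcc (hmem s hs) (hmem x hx))
  have hadd := intervalIntegral.integral_add_adjacent_intervals hIs hIsx
  have h1 := h.2 x hx
  have h2 := h.2 s hs
  rw [h1, h2]
  linarith

theorem ACOn.continuousOn' {f : ℝ → ℝ} {c d : ℝ} (h : ACOn f c d) (hcd : c ≤ d) :
    ContinuousOn f (Icc c d) := by
  have hprim := intervalIntegral.continuousOn_primitive_interval' h.1
    (left_mem_uIcc (a := c) (b := d))
  rw [uIcc_of_le hcd] at hprim
  exact ContinuousOn.congr (continuousOn_const.add hprim) h.2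

/-- Pointwise lower bound for a strongly degenerate coefficient. -/
theorem a_lower {a : ℝ → ℝ} {x₀ K : ℝ} (hx₀ : x₀ ∈ Ioo (0:ℝ) 1) (hax₀ : a x₀ = 0)
    (hpos : ∀ x ∈ Icc (0:ℝ) 1, x ≠ x₀ → 0 < a x)
    (hae : ∀ᵐ x ∂(volume.restrict (Icc (0:ℝ) 1)), (x - x₀) * deriv a x ≤ K * a x)
    (hACa : ACOn a 0 1) (hK : K ∈ Ico (1:ℝ) 2) :
    ∃ c₀ > 0, ∀ x ∈ Icc (0:ℝ) 1, c₀ * |x - x₀| ^ ((K+2)/2) ≤ a x := by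
  have h0x₀ : 0 < x₀ := hx₀.1
  have hx₀1 : x₀ < 1 := hx₀.2
  have ha0 : 0 < a 0 := hpos 0 ⟨le_rfl, zero_le_one⟩ (ne_of_lt h0x₀)
  have ha1 : 0 < a 1 := hpos 1 ⟨zero_le_one, le_rfl⟩ (ne_of_gt hx₀1)
  have hKκ : K ≤ (K+2)/2 := by linarith [hK.2]
  -- the right-hand bound
  have hR : ∀ x ∈ Ioc x₀ 1, a 1 * (1 - x₀) ^ (-K) * (x - x₀) ^ K ≤ a x := by
    intro x hx
    have hxx : x₀ < x := hx.1
    have hx1 : x ≤ 1 := hx.2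
    have hx0 : 0 ≤ x := (h0x₀.trans hxx).le
    set φ : ℝ → ℝ := fun y => (y - x₀) ^ (-K) with hφdef
    set φ' : ℝ → ℝ := fun y => -K * (y - x₀) ^ (-K - 1) with hφ'def
    have hder : ∀ y ∈ Icc x 1, HasDerivAt φ (φ' y) y := by
      intro y hy
      have h0 : y - x₀ ≠ 0 := ne_of_gt (by linarith [hy.1] : (0:ℝ) < y - x₀)
      have := ((hasDerivAt_id y).sub_const x₀).rpow_const (p := -K) (Or.inl h0)
      simpa [hφ'def] using this
    have hφ'cont : ContinuousOn φ' (Icc x 1) :=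
      continuousOn_const.mul ((continuousOn_id.sub continuousOn_const).rpow_const
        (fun y hy => Or.inl (ne_of_gt (show (0:ℝ) < y - x₀ by linarith [hy.1]))))
    have hφrep : ∀ y ∈ Icc x 1, φ y = φ x + ∫ t in Ioc x y, φ' t := by
      intro y hy
      have hxy : x ≤ y := hy.1
      have hsub : Icc x y ⊆ Icc x 1 := Icc_subset_Icc le_rfl hy.2
      have hftc : ∫ t in x..y, φ' t = φ y - φ x := by
        apply intervalIntegral.integral_eq_sub_of_hasDerivAt
        · intro t ht
          rw [uIcc_of_le hxy] at ht
          exact hder t (hsub ht)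
        · apply ContinuousOn.intervalIntegrable
          rw [uIcc_of_le hxy]
          exact hφ'cont.mono hsub
      rw [← intervalIntegral.integral_of_le hxy, hftc]; ring
    have harep : ∀ y ∈ Icc x 1, a y = a x + ∫ t in Ioc x y, deriv a t := by
      intro y hy
      have := ACOn.rep_sub hACa (show x ∈ Icc (0:ℝ) 1 from ⟨hx0, hx1⟩)
        (show y ∈ Icc (0:ℝ) 1 from ⟨hx0.trans hy.1, hy.2⟩)
      rw [this, intervalIntegral.integral_of_le hy.1]
    have hFi : IntegrableOn (deriv a) (Ioc x 1) := by
      rw [← intervalIntegrable_iff_integrableOn_Ioc_of_le hx1]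
      apply hACa.1.mono_set
      rw [uIcc_of_le hx1, uIcc_of_le (zero_le_one)]
      exact Icc_subset_Icc hx0 le_rfl
    have hGi : IntegrableOn φ' (Ioc x 1) :=
      (hφ'cont.integrableOn_Icc).mono_set Ioc_subset_Icc_self
    have hibp := ibp_ftc hx1 hFi hGi harep hφrep
    have hae' : ∀ᵐ y ∂(volume.restrict (Ioc x 1)), (y - x₀) * deriv a y ≤ K * a y :=
      ae_restrict_of_ae_restrict_of_subset
        (show Ioc x 1 ⊆ Icc (0:ℝ) 1 from fun y hy => ⟨hx0.trans hy.1.le, hy.2⟩) hae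
    have hneg : ∫ y in Ioc x 1, (deriv a y * φ y + a y * φ' y) ≤ 0 := by
      apply integral_nonpos_of_ae
      filter_upwards [hae', ae_restrict_mem measurableSet_Ioc] with y h1 h2
      have hypos : (0:ℝ) < y - x₀ := by linarith [h2.1]
      have e : deriv a y * φ y + a y * φ' y
          = ((y - x₀) ^ (-K - 1)) * ((y - x₀) * deriv a y - K * a y) := by
        simp only [hφdef, hφ'def]
        rw [show (-K : ℝ) = (-K - 1) + 1 by ring, Real.rpow_add hypos, Real.rpow_one]
        ring
      rw [e]
      exact mul_nonpos_of_nonneg_of_nonpos (Real.rpow_nonneg hypos.le _) (by linarith)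
    rw [hibp] at hneg
    have key : a 1 * (1 - x₀) ^ (-K) ≤ a x * (x - x₀) ^ (-K) := by
      have e1 : φ 1 = (1 - x₀) ^ (-K) := rfl
      have e x' : φ x' = (x' - x₀) ^ (-K) := rfl
      simp only [e] at hneg
      linarith
    have hxx0 : (0:ℝ) < x - x₀ := by linarith
    have hinv : (x - x₀) ^ (-K) * (x - x₀) ^ K = 1 := by
      rw [← Real.rpow_add hxx0]; simp
    calc a 1 * (1 - x₀) ^ (-K) * (x - x₀) ^ K
        ≤ a x * (x - x₀) ^ (-K) * (x - x₀) ^ K :=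
          mul_le_mul_of_nonneg_right key (Real.rpow_nonneg hxx0.le _)
      _ = a x := by rw [mul_assoc, hinv, mul_one]
  -- the left-hand bound
  have hL : ∀ x ∈ Ico (0:ℝ) x₀, a 0 * x₀ ^ (-K) * (x₀ - x) ^ K ≤ a x := by
    intro x hx
    have hxx : x < x₀ := hx.2
    have hx0 : 0 ≤ x := hx.1
    have hx1 : x ≤ 1 := hxx.le.trans hx₀1.le
    set ψ : ℝ → ℝ := fun y => (x₀ - y) ^ (-K) with hψdef
    set ψ' : ℝ → ℝ := fun y => K * (x₀ - y) ^ (-K - 1) with hψ'def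
    have hder : ∀ y ∈ Icc 0 x, HasDerivAt ψ (ψ' y) y := by
      intro y hy
      have h0 : x₀ - y ≠ 0 := ne_of_gt (by linarith [hy.2] : (0:ℝ) < x₀ - y)
      have h1 : HasDerivAt (fun y : ℝ => x₀ - y) (-1) y := by
        simpa using (hasDerivAt_id y).const_sub x₀
      have := h1.rpow_const (p := -K) (Or.inl h0)
      convert this using 1
      simp only [hψ'def]; ring
    have hψ'cont : ContinuousOn ψ' (Icc 0 x) :=
      continuousOn_const.mul ((continuousOn_const.sub continuousOn_id).rpow_const
        (fun y hy => Or.inl (ne_of_gt (show (0:ℝ) < x₀ - y by linarith [hy.2]))))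
    have hψrep : ∀ y ∈ Icc 0 x, ψ y = ψ 0 + ∫ t in Ioc 0 y, ψ' t := by
      intro y hy
      have hftc : ∫ t in (0:ℝ)..y, ψ' t = ψ y - ψ 0 := by
        apply intervalIntegral.integral_eq_sub_of_hasDerivAt
        · intro t ht
          rw [uIcc_of_le hy.1] at ht
          exact hder t ⟨ht.1, ht.2.trans hy.2⟩
        · apply ContinuousOn.intervalIntegrable
          rw [uIcc_of_le hy.1]
          exact hψ'cont.mono (Icc_subset_Icc le_rfl hy.2)
      rw [← intervalIntegral.integral_of_le hy.1, hftc]; ring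
    have harep : ∀ y ∈ Icc 0 x, a y = a 0 + ∫ t in Ioc 0 y, deriv a t := by
      intro y hy
      have := ACOn.rep_sub hACa (show (0:ℝ) ∈ Icc (0:ℝ) 1 from ⟨le_rfl, zero_le_one⟩)
        (show y ∈ Icc (0:ℝ) 1 from ⟨hy.1, hy.2.trans hx1⟩)
      rw [this, intervalIntegral.integral_of_le hy.1]
    have hFi : IntegrableOn (deriv a) (Ioc 0 x) := by
      rw [← intervalIntegrable_iff_integrableOn_Ioc_of_le hx0]
      apply hACa.1.mono_set
      rw [uIcc_of_le hx0, uIcc_of_le (zero_le_one)]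
      exact Icc_subset_Icc le_rfl hx1
    have hGi : IntegrableOn ψ' (Ioc 0 x) :=
      (hψ'cont.integrableOn_Icc).mono_set Ioc_subset_Icc_self
    have hibp := ibp_ftc hx0 hFi hGi harep hψrep
    have hae' : ∀ᵐ y ∂(volume.restrict (Ioc 0 x)), (y - x₀) * deriv a y ≤ K * a y :=
      ae_restrict_of_ae_restrict_of_subset
        (show Ioc 0 x ⊆ Icc (0:ℝ) 1 from fun y hy => ⟨hy.1.le, hy.2.trans hx1⟩) hae
    have hpos' : 0 ≤ ∫ y in Ioc 0 x, (deriv a y * ψ y + a y * ψ' y) := by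
      apply MeasureTheory.integral_nonneg_of_ae
      filter_upwards [hae', ae_restrict_mem measurableSet_Ioc] with y h1 h2
      have hypos : (0:ℝ) < x₀ - y := by linarith [h2.2]
      have e : deriv a y * ψ y + a y * ψ' y
          = ((x₀ - y) ^ (-K - 1)) * (K * a y - (y - x₀) * deriv a y) := by
        simp only [hψdef, hψ'def]
        rw [show (-K : ℝ) = (-K - 1) + 1 by ring, Real.rpow_add hypos, Real.rpow_one]
        ring
      rw [e]
      exact mul_nonneg (Real.rpow_nonneg hypos.le _) (by linarith)
    rw [hibp] at hpos'
    have key : a 0 * x₀ ^ (-K) ≤ a x * (x₀ - x) ^ (-K) := by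
      have e y' : ψ y' = (x₀ - y') ^ (-K) := rfl
      simp only [e] at hpos'
      have : (x₀ - (0:ℝ)) = x₀ := by ring
      rw [this] at hpos'
      linarith
    have hxx0 : (0:ℝ) < x₀ - x := by linarith
    have hinv : (x₀ - x) ^ (-K) * (x₀ - x) ^ K = 1 := by
      rw [← Real.rpow_add hxx0]; simp
    calc a 0 * x₀ ^ (-K) * (x₀ - x) ^ K
        ≤ a x * (x₀ - x) ^ (-K) * (x₀ - x) ^ K :=
          mul_le_mul_of_nonneg_right key (Real.rpow_nonneg hxx0.le _)
      _ = a x := by rw [mul_assoc, hinv, mul_one]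
  -- combine
  refine ⟨min (a 0 * x₀ ^ (-K)) (a 1 * (1 - x₀) ^ (-K)), ?_, ?_⟩
  · exact lt_min (mul_pos ha0 (Real.rpow_pos_of_pos h0x₀ _))
      (mul_pos ha1 (Real.rpow_pos_of_pos (by linarith) _))
  intro x hxm
  rcases lt_trichotomy x x₀ with hlt | heq | hgt
  · have habs : |x - x₀| = x₀ - x := by rw [abs_of_neg (by linarith)]; ring
    have hb0 : (0:ℝ) < x₀ - x := by linarith
    have hb1 : x₀ - x ≤ 1 := by linarith [hxm.1]
    have hexp : (x₀ - x) ^ ((K+2)/2) ≤ (x₀ - x) ^ K :=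
      Real.rpow_le_rpow_of_exponent_ge hb0 hb1 hKκ
    calc min (a 0 * x₀ ^ (-K)) (a 1 * (1 - x₀) ^ (-K)) * |x - x₀| ^ ((K+2)/2)
        ≤ a 0 * x₀ ^ (-K) * (x₀ - x) ^ K := by
          rw [habs]
          exact mul_le_mul (min_le_left _ _) hexp (Real.rpow_nonneg hb0.le _)
            (mul_nonneg ha0.le (Real.rpow_nonneg h0x₀.le _))
      _ ≤ a x := hL x ⟨hxm.1, hlt⟩
  · subst heq
    simp only [sub_self, abs_zero]
    rw [Real.zero_rpow (ne_of_gt (by linarith [hK.1] : (0:ℝ) < (K+2)/2))]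
    simp [hax₀]
  · have habs : |x - x₀| = x - x₀ := abs_of_pos (by linarith)
    have hb0 : (0:ℝ) < x - x₀ := by linarith
    have hb1 : x - x₀ ≤ 1 := by linarith [hxm.2]
    have hexp : (x - x₀) ^ ((K+2)/2) ≤ (x - x₀) ^ K :=
      Real.rpow_le_rpow_of_exponent_ge hb0 hb1 hKκ
    calc min (a 0 * x₀ ^ (-K)) (a 1 * (1 - x₀) ^ (-K)) * |x - x₀| ^ ((K+2)/2)
        ≤ a 1 * (1 - x₀) ^ (-K) * (x - x₀) ^ K := by
          rw [habs]
          exact mul_le_mul (min_le_right _ _) hexp (Real.rpow_nonneg hb0.le _)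
            (mul_nonneg ha1.le (Real.rpow_nonneg (by linarith) _))
      _ ≤ a x := hR x ⟨hgt, hxm.2⟩

end Helpers

end
open Topology
/-- Integration by parts formula, strongly degenerate case. -/
theorem statement1 (a : ℝ → ℝ) (x₀ : ℝ) (ha : ∃ K, StronglyDeg a x₀ K)
    (u v : ℝ → ℝ) (hu : MemDA1 a u x₀ false) (hv : MemH1aStrong a v x₀) :
    (∫ x in Ioo (0:ℝ) 1, deriv (fun y => a y * deriv u y) x * v x)
      = - ∫ x in Ioo (0:ℝ) 1, a x * deriv u x * deriv v x := by
  obtain ⟨K, hSD⟩ := ha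
  obtain ⟨⟨hx₀, hax₀, hpos, hae⟩, ⟨hACa, _hb⟩, hK⟩ := hSD
  obtain ⟨⟨⟨huL2, huLAC, hau'2⟩, hwAC, hw'2⟩, hdu0, hdu1⟩ := hu
  obtain ⟨hvL2, hvLAC, hav'2⟩ := hv
  have h0x₀ : 0 < x₀ := hx₀.1
  have hx₀1 : x₀ < 1 := hx₀.2
  set w : ℝ → ℝ := fun y => a y * deriv u y with hwdef
  set κ : ℝ := (K + 2)/2 with hκdef
  have hκ1 : 1 < κ := by rw [hκdef]; linarith [hK.1]
  have hκ2 : κ < 2 := by rw [hκdef]; linarith [hK.2]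
  obtain ⟨c₀, hc₀, hlow₀⟩ := a_lower hx₀ hax₀ hpos hae hACa hK
  have hlow : ∀ x ∈ Icc (0:ℝ) 1, c₀ * |x - x₀| ^ κ ≤ a x := by
    rw [hκdef]; exact hlow₀
  clear hlow₀
  have hw0 : w 0 = 0 := by rw [hwdef]; simp [hdu0]
  have hw1 : w 1 = 0 := by rw [hwdef]; simp [hdu1]
  have hwx₀ : w x₀ = 0 := by rw [hwdef]; simp [hax₀]
  have hanneg : ∀ x ∈ Icc (0:ℝ) 1, 0 ≤ a x := by
    intro x hx
    rcases eq_or_ne x x₀ with h|h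
    · rw [h, hax₀]
    · exact (hpos x hx h).le
  have haCont : ContinuousOn a (Icc 0 1) := hACa.continuousOn' zero_le_one
  -- measurability facts
  have haMeas : AEStronglyMeasurable a (volume.restrict (Ioo 0 1)) :=
    ((haCont.mono Ioo_subset_Icc_self).aemeasurable measurableSet_Ioo).aestronglyMeasurable
  have hw'Meas : AEStronglyMeasurable (deriv w) (volume.restrict (Ioo 0 1)) :=
    (measurable_deriv w).aestronglyMeasurable
  have hwMeas : AEStronglyMeasurable w (volume.restrict (Ioo 0 1)) := by
    rw [hwdef]
    exact haMeas.mul (measurable_deriv u).aestronglyMeasurable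
  have hvCont1 : ContinuousOn v (Ico 0 x₀) := by
    intro x hx
    have hxd : x < (x + x₀)/2 := by linarith [hx.2]
    have hdx₀ : (x + x₀)/2 < x₀ := by linarith [hx.2]
    have h0d : (0:ℝ) ≤ (x + x₀)/2 := by linarith [hx.1, h0x₀]
    have hac := hvLAC.1 0 ((x + x₀)/2) le_rfl h0d hdx₀
    have hcwa := (hac.continuousOn' h0d) x ⟨hx.1, hxd.le⟩
    apply hcwa.mono_of_mem_nhdsWithin
    apply Filter.mem_of_superset (inter_mem_nhdsWithin (Ico 0 x₀) (Iio_mem_nhds hxd))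
    rintro y ⟨hy1, hy2⟩
    exact ⟨hy1.1, le_of_lt hy2⟩
  have hvCont2 : ContinuousOn v (Ioc x₀ 1) := by
    intro x hx
    have hcx : (x₀ + x)/2 < x := by linarith [hx.1]
    have hx₀c : x₀ < (x₀ + x)/2 := by linarith [hx.1]
    have hc1 : (x₀ + x)/2 ≤ 1 := by linarith [hx.2, hx₀1]
    have hac := hvLAC.2 ((x₀ + x)/2) 1 hx₀c hc1 le_rfl
    have hcwa := (hac.continuousOn' hc1) x ⟨hcx.le, hx.2⟩
    apply hcwa.mono_of_mem_nhdsWithin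
    apply Filter.mem_of_superset (inter_mem_nhdsWithin (Ioc x₀ 1) (Ioi_mem_nhds hcx))
    rintro y ⟨hy1, hy2⟩
    exact ⟨le_of_lt hy2, hy1.2⟩
  have hvMeas : AEStronglyMeasurable v (volume.restrict (Ioo 0 1)) := by
    have hseteq : Ioo (0:ℝ) x₀ ∪ Ioo x₀ 1 = Ioo 0 1 \ {x₀} := by
      ext y
      simp only [mem_union, mem_Ioo, mem_diff, mem_singleton_iff]
      constructor
      · rintro (⟨h1, h2⟩ | ⟨h1, h2⟩)
        · exact ⟨⟨h1, h2.trans hx₀1⟩, ne_of_lt h2⟩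
        · exact ⟨⟨h0x₀.trans h1, h2⟩, ne_of_gt h1⟩
      · rintro ⟨⟨h1, h2⟩, h3⟩
        rcases lt_or_gt_of_ne h3 with h|h
        · exact Or.inl ⟨h1, h⟩
        · exact Or.inr ⟨h, h2⟩
    have hres : volume.restrict (Ioo (0:ℝ) 1) = volume.restrict (Ioo 0 x₀ ∪ Ioo x₀ 1) := by
      apply Measure.restrict_congr_set
      rw [hseteq]
      have hnull : (volume : Measure ℝ) (Ioo 0 1 ∩ {x₀}) = 0 :=
        measure_mono_null inter_subset_right (measure_singleton x₀)
      exact ((diff_ae_eq_self (s := Ioo (0:ℝ) 1) (t := ({x₀} : Set ℝ))).2 hnull).symm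
    rw [hres, Measure.restrict_union (by
        apply Set.disjoint_left.2
        rintro y ⟨_, h2⟩ ⟨h3, _⟩
        exact absurd h3 (not_lt.2 h2.le)) measurableSet_Ioo,
      aestronglyMeasurable_add_measure_iff]
    constructor
    · exact ((hvCont1.mono (fun y hy => ⟨hy.1.le, hy.2⟩)).aemeasurable
        measurableSet_Ioo).aestronglyMeasurable
    · exact ((hvCont2.mono (fun y hy => ⟨hy.1, hy.2.le⟩)).aemeasurable
        measurableSet_Ioo).aestronglyMeasurable
  -- constants
  set M₂ : ℝ := Real.sqrt (∫ x in Ioo (0:ℝ) 1, (deriv w x)^2) with hM₂def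
  set M₃ : ℝ := Real.sqrt (∫ x in Ioo (0:ℝ) 1, a x * (deriv v x)^2) with hM₃def
  have hM₂0 : 0 ≤ M₂ := Real.sqrt_nonneg _
  have hM₃0 : 0 ≤ M₃ := Real.sqrt_nonneg _
  have hw'sqIcc : IntegrableOn (fun x => (deriv w x)^2) (Icc 0 1) :=
    (integrableOn_Icc_iff_integrableOn_Ioo).2 hw'2
  have hav'Icc : IntegrableOn (fun x => a x * (deriv v x)^2) (Icc 0 1) :=
    (integrableOn_Icc_iff_integrableOn_Ioo).2 hav'2
  -- the fundamental bound for w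
  have hwb : ∀ x ∈ Icc (0:ℝ) 1, |w x| ≤ M₂ * Real.sqrt |x - x₀| := by
    intro x hx
    have hx₀m : x₀ ∈ Icc (0:ℝ) 1 := ⟨h0x₀.le, hx₀1.le⟩
    have hrep := ACOn.rep_sub hwAC hx₀m hx
    rw [hwx₀, zero_add] at hrep
    have haux : ∀ s t : ℝ, s ≤ t → s ∈ Icc (0:ℝ) 1 → t ∈ Icc (0:ℝ) 1 →
        |∫ y in Ioc s t, deriv w y| ≤ M₂ * Real.sqrt (t - s) := by
      intro s t hst hsm htm
      have hsub : Ioc s t ⊆ Icc (0:ℝ) 1 := fun y hy => ⟨hsm.1.trans hy.1.le, hy.2.trans htm.2⟩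
      have hsq : IntegrableOn (fun y => (deriv w y)^2) (Ioc s t) := hw'sqIcc.mono_set hsub
      have h1int' : IntegrableOn (fun _ : ℝ => (1:ℝ)^2) (Ioc s t) := by
        exact integrableOn_const measure_Ioc_lt_top.ne
      have hcs := cs_abs_le (μ := volume.restrict (Ioc s t))
        (measurable_deriv w).aestronglyMeasurable aestronglyMeasurable_const hsq h1int'
      have habs : |∫ y in Ioc s t, deriv w y| ≤ ∫ y in Ioc s t, |deriv w y * 1| := by
        have h := norm_integral_le_integral_norm (μ := volume.restrict (Ioc s t)) (deriv w)
        simpa [Real.norm_eq_abs] using h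
      have hone : (∫ y in Ioc s t, (1:ℝ)^2) = t - s := by
        simp [Real.volume_Ioc, ENNReal.toReal_ofReal (sub_nonneg.2 hst), hst]
      have hmono : (∫ y in Ioc s t, (deriv w y)^2) ≤ ∫ y in Ioo (0:ℝ) 1, (deriv w y)^2 := by
        rw [show (∫ y in Ioo (0:ℝ) 1, (deriv w y)^2) = ∫ y in Icc (0:ℝ) 1, (deriv w y)^2 from
          (integral_Icc_eq_integral_Ioo).symm]
        apply setIntegral_mono_set hw'sqIcc
          (Filter.Eventually.of_forall (fun y => sq_nonneg _))
          (HasSubset.Subset.eventuallyLE hsub)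
      calc |∫ y in Ioc s t, deriv w y| ≤ ∫ y in Ioc s t, |deriv w y * 1| := habs
        _ ≤ Real.sqrt (∫ y in Ioc s t, (deriv w y)^2) * Real.sqrt (∫ y in Ioc s t, (1:ℝ)^2) := hcs
        _ ≤ M₂ * Real.sqrt (t - s) := by
            rw [hone, hM₂def]
            exact mul_le_mul_of_nonneg_right (Real.sqrt_le_sqrt hmono) (Real.sqrt_nonneg _)
    rcases le_total x₀ x with hle | hle
    · rw [hrep, intervalIntegral.integral_of_le hle]
      have := haux x₀ x hle ⟨h0x₀.le, hx₀1.le⟩ hx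
      rwa [show Real.sqrt (x - x₀) = Real.sqrt |x - x₀| by rw [abs_of_nonneg (by linarith)]] at this
    · rw [hrep, intervalIntegral.integral_symm, abs_neg, intervalIntegral.integral_of_le hle]
      have := haux x x₀ hle hx ⟨h0x₀.le, hx₀1.le⟩
      rwa [show Real.sqrt (x₀ - x) = Real.sqrt |x - x₀| by
        rw [abs_sub_comm, abs_of_nonneg (by linarith)]] at this
  -- explicit integral bounds for 1/a near x₀
  have hκ1' : κ - 1 ≠ 0 := ne_of_gt (by linarith)
  have hIL : ∀ s ∈ Ico (0:ℝ) x₀, (∫ t in Ioc 0 s, (x₀ - t) ^ (-κ)) ≤ (x₀ - s)^(1-κ)/(κ-1) := by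
    intro s hs
    have hs0 : (0:ℝ) ≤ s := hs.1
    have hsx₀ : s < x₀ := hs.2
    have hder : ∀ t ∈ Icc 0 s, HasDerivAt (fun y => (x₀ - y)^(1-κ)/(κ-1)) ((x₀ - t)^(-κ)) t := by
      intro t ht
      have h0 : (0:ℝ) < x₀ - t := by linarith [ht.2]
      have h1 : HasDerivAt (fun y : ℝ => x₀ - y) (-1) t := by
        simpa using (hasDerivAt_id t).const_sub x₀
      have h2 := (h1.rpow_const (p := 1-κ) (Or.inl (ne_of_gt h0))).div_const (κ-1)
      refine h2.congr_deriv ?_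
      rw [show (1-κ-1 : ℝ) = -κ by ring]
      field_simp
      ring
    have hcont : ContinuousOn (fun t : ℝ => (x₀ - t)^(-κ)) (Icc 0 s) :=
      (continuousOn_const.sub continuousOn_id).rpow_const
        (fun t ht => Or.inl (ne_of_gt (show (0:ℝ) < x₀ - t by linarith [ht.2])))
    have hftc : ∫ t in (0:ℝ)..s, (x₀ - t)^(-κ)
        = (x₀ - s)^(1-κ)/(κ-1) - (x₀ - 0)^(1-κ)/(κ-1) := by
      apply intervalIntegral.integral_eq_sub_of_hasDerivAt
      · intro t ht; rw [uIcc_of_le hs0] at ht; exact hder t ht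
      · apply ContinuousOn.intervalIntegrable; rw [uIcc_of_le hs0]; exact hcont
    rw [← intervalIntegral.integral_of_le hs0, hftc]
    have : (0:ℝ) ≤ (x₀ - 0)^(1-κ)/(κ-1) :=
      div_nonneg (Real.rpow_nonneg (by linarith) _) (by linarith)
    linarith
  have hIR : ∀ s ∈ Ioc x₀ 1, (∫ t in Ioc s 1, (t - x₀) ^ (-κ)) ≤ (s - x₀)^(1-κ)/(κ-1) := by
    intro s hs
    have hs1 : s ≤ 1 := hs.2
    have hsx₀ : x₀ < s := hs.1
    have hder : ∀ t ∈ Icc s 1, HasDerivAt (fun y => -((y - x₀)^(1-κ)/(κ-1))) ((t - x₀)^(-κ)) t := by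
      intro t ht
      have h0 : (0:ℝ) < t - x₀ := by linarith [ht.1]
      have h2 := ((((hasDerivAt_id t).sub_const x₀).rpow_const
        (p := 1-κ) (Or.inl (ne_of_gt h0))).div_const (κ-1)).neg
      refine h2.congr_deriv ?_
      rw [show (1-κ-1 : ℝ) = -κ by ring]
      field_simp
      simp only [id]
      ring
    have hcont : ContinuousOn (fun t : ℝ => (t - x₀)^(-κ)) (Icc s 1) :=
      (continuousOn_id.sub continuousOn_const).rpow_const
        (fun t ht => Or.inl (ne_of_gt (show (0:ℝ) < t - x₀ by linarith [ht.1])))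
    have hftc : ∫ t in s..(1:ℝ), (t - x₀)^(-κ)
        = -(((1:ℝ) - x₀)^(1-κ)/(κ-1)) - -((s - x₀)^(1-κ)/(κ-1)) := by
      apply intervalIntegral.integral_eq_sub_of_hasDerivAt
        (f := fun y => -((y - x₀)^(1-κ)/(κ-1)))
      · intro t ht; rw [uIcc_of_le hs1] at ht; exact hder t ht
      · apply ContinuousOn.intervalIntegrable; rw [uIcc_of_le hs1]; exact hcont
    rw [← intervalIntegral.integral_of_le hs1, hftc]
    have : (0:ℝ) ≤ ((1:ℝ) - x₀)^(1-κ)/(κ-1) :=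
      div_nonneg (Real.rpow_nonneg (by linarith) _) (by linarith)
    linarith
  -- bounds for v near x₀
  have hvbL : ∀ s ∈ Ico (0:ℝ) x₀,
      |v s| ≤ |v 0| + M₃ * Real.sqrt (c₀⁻¹ * ((x₀ - s)^(1-κ)/(κ-1))) := by
    intro s hs
    have hs0 : (0:ℝ) ≤ s := hs.1
    have hsx₀ : s < x₀ := hs.2
    have hACv := hvLAC.1 0 s le_rfl hs0 hsx₀
    have hrep := hACv.2 s ⟨hs0, le_rfl⟩
    set f : ℝ → ℝ := fun t => (Real.sqrt (a t))⁻¹ with hfdef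
    set g : ℝ → ℝ := fun t => Real.sqrt (a t) * deriv v t with hgdef
    have hsubIcc : Icc (0:ℝ) s ⊆ Icc 0 1 := Icc_subset_Icc le_rfl (by linarith)
    have hsubIoo : Ioc (0:ℝ) s ⊆ Ioo 0 1 :=
      fun t ht => ⟨ht.1, lt_of_le_of_lt ht.2 (by linarith)⟩
    have hpos' : ∀ t ∈ Icc (0:ℝ) s, 0 < a t := fun t ht =>
      hpos t (hsubIcc ht) (ne_of_lt (lt_of_le_of_lt ht.2 hsx₀))
    have hsqCont : ContinuousOn (fun t => Real.sqrt (a t)) (Icc 0 s) :=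
      Real.continuous_sqrt.comp_continuousOn (haCont.mono hsubIcc)
    have hfCont : ContinuousOn f (Icc 0 s) :=
      hsqCont.inv₀ (fun t ht => ne_of_gt (Real.sqrt_pos.2 (hpos' t ht)))
    have hfM : AEStronglyMeasurable f (volume.restrict (Ioc 0 s)) :=
      ((hfCont.mono Ioc_subset_Icc_self).aemeasurable measurableSet_Ioc).aestronglyMeasurable
    have hgM : AEStronglyMeasurable g (volume.restrict (Ioc 0 s)) :=
      ((((hsqCont.mono Ioc_subset_Icc_self).aemeasurable measurableSet_Ioc)).mul
        (measurable_deriv v).aemeasurable).aestronglyMeasurable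
    have hf2 : IntegrableOn (fun t => f t ^ 2) (Ioc 0 s) :=
      ((hfCont.pow 2).integrableOn_Icc).mono_set Ioc_subset_Icc_self
    have hg2 : IntegrableOn (fun t => g t ^ 2) (Ioc 0 s) := by
      apply (hav'2.mono_set hsubIoo).congr
      filter_upwards [ae_restrict_mem measurableSet_Ioc] with t ht
      rw [hgdef]
      simp only
      rw [mul_pow, Real.sq_sqrt (hanneg t (hsubIcc (Ioc_subset_Icc_self ht)))]
    have hkey : ∫ t in Ioc 0 s, |deriv v t|
        ≤ Real.sqrt (∫ t in Ioc 0 s, f t ^ 2) * Real.sqrt (∫ t in Ioc 0 s, g t ^ 2) := by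
      have he : EqOn (fun t => |deriv v t|) (fun t => |f t * g t|) (Ioc 0 s) := by
        intro t ht
        have hat : 0 < a t := hpos' t (Ioc_subset_Icc_self ht)
        simp only [hfdef, hgdef]
        rw [← mul_assoc, inv_mul_cancel₀ (ne_of_gt (Real.sqrt_pos.2 hat)), one_mul]
      rw [setIntegral_congr_fun measurableSet_Ioc he]
      exact cs_abs_le hfM hgM hf2 hg2
    have hfact1 : ∫ t in Ioc 0 s, f t ^ 2 ≤ c₀⁻¹ * ((x₀ - s)^(1-κ)/(κ-1)) := by
      have hcont2 : ContinuousOn (fun t : ℝ => c₀⁻¹ * (x₀ - t)^(-κ)) (Icc 0 s) :=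
        continuousOn_const.mul ((continuousOn_const.sub continuousOn_id).rpow_const
          (fun t ht => Or.inl (ne_of_gt (show (0:ℝ) < x₀ - t by linarith [ht.2]))))
      calc ∫ t in Ioc 0 s, f t ^ 2 ≤ ∫ t in Ioc 0 s, c₀⁻¹ * (x₀ - t)^(-κ) := by
            apply setIntegral_mono_on hf2
              ((hcont2.integrableOn_Icc).mono_set Ioc_subset_Icc_self) measurableSet_Ioc
            intro t ht
            have hat : 0 < a t := hpos' t (Ioc_subset_Icc_self ht)
            have htx : (0:ℝ) < x₀ - t := by linarith [ht.2]
            have hlow' : c₀ * (x₀ - t)^κ ≤ a t := by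
              have := hlow t (hsubIcc (Ioc_subset_Icc_self ht))
              rwa [show |t - x₀| = x₀ - t by rw [abs_sub_comm]; exact abs_of_pos htx] at this
            have hfv : f t ^ 2 = (a t)⁻¹ := by
              simp only [hfdef]
              rw [inv_pow, Real.sq_sqrt hat.le]
            rw [hfv, Real.rpow_neg htx.le, ← mul_inv]
            exact inv_anti₀ (mul_pos hc₀ (Real.rpow_pos_of_pos htx _)) hlow'
        _ = c₀⁻¹ * ∫ t in Ioc 0 s, (x₀ - t)^(-κ) := MeasureTheory.integral_const_mul _ _
        _ ≤ c₀⁻¹ * ((x₀ - s)^(1-κ)/(κ-1)) :=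
            mul_le_mul_of_nonneg_left (hIL s hs) (inv_nonneg.2 hc₀.le)
    have hfact2 : ∫ t in Ioc 0 s, g t ^ 2 ≤ ∫ t in Ioo (0:ℝ) 1, a t * (deriv v t)^2 := by
      have he2 : EqOn (fun t => g t ^ 2) (fun t => a t * (deriv v t)^2) (Ioc 0 s) := by
        intro t ht
        simp only [hgdef]
        rw [mul_pow, Real.sq_sqrt (hanneg t (hsubIcc (Ioc_subset_Icc_self ht)))]
      rw [setIntegral_congr_fun measurableSet_Ioc he2,
        show (∫ t in Ioo (0:ℝ) 1, a t * (deriv v t)^2)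
          = ∫ t in Icc (0:ℝ) 1, a t * (deriv v t)^2 from (integral_Icc_eq_integral_Ioo).symm]
      apply setIntegral_mono_set hav'Icc
      · filter_upwards [ae_restrict_mem measurableSet_Icc] with t ht
        exact mul_nonneg (hanneg t ht) (sq_nonneg _)
      · exact HasSubset.Subset.eventuallyLE (fun t ht => hsubIcc (Ioc_subset_Icc_self ht))
    have habs : |v s| ≤ |v 0| + ∫ t in Ioc 0 s, |deriv v t| := by
      rw [hrep]
      refine (abs_add_le _ _).trans ?_
      have h1 := intervalIntegral.abs_integral_le_integral_abs (f := deriv v)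
        (a := (0:ℝ)) (b := s) (μ := volume) hs0
      have h2 : (∫ t in (0:ℝ)..s, |deriv v t|) = ∫ t in Ioc 0 s, |deriv v t| :=
        intervalIntegral.integral_of_le hs0
      rw [h2] at h1
      linarith
    have hB : Real.sqrt (∫ t in Ioc 0 s, g t ^ 2) ≤ M₃ := by
      rw [hM₃def]
      exact Real.sqrt_le_sqrt hfact2
    have hA : Real.sqrt (∫ t in Ioc 0 s, f t ^ 2)
        ≤ Real.sqrt (c₀⁻¹ * ((x₀ - s)^(1-κ)/(κ-1))) := Real.sqrt_le_sqrt hfact1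
    calc |v s| ≤ |v 0| + ∫ t in Ioc 0 s, |deriv v t| := habs
      _ ≤ |v 0| + Real.sqrt (∫ t in Ioc 0 s, f t ^ 2) * Real.sqrt (∫ t in Ioc 0 s, g t ^ 2) := by
          linarith
      _ ≤ |v 0| + M₃ * Real.sqrt (c₀⁻¹ * ((x₀ - s)^(1-κ)/(κ-1))) := by
          have := mul_le_mul hA hB (Real.sqrt_nonneg _) (Real.sqrt_nonneg _)
          rw [mul_comm M₃ _]
          linarith
  have hvbR : ∀ s ∈ Ioc x₀ 1,
      |v s| ≤ |v 1| + M₃ * Real.sqrt (c₀⁻¹ * ((s - x₀)^(1-κ)/(κ-1))) := by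
    intro s hs
    have hs1 : s ≤ 1 := hs.2
    have hsx₀ : x₀ < s := hs.1
    have hACv := hvLAC.2 s 1 hsx₀ hs1 le_rfl
    have hrep := hACv.2 1 ⟨hs1, le_rfl⟩
    set f : ℝ → ℝ := fun t => (Real.sqrt (a t))⁻¹ with hfdef
    set g : ℝ → ℝ := fun t => Real.sqrt (a t) * deriv v t with hgdef
    have hsubIcc : Icc s 1 ⊆ Icc (0:ℝ) 1 := Icc_subset_Icc (by linarith) le_rfl
    have hpos' : ∀ t ∈ Icc s 1, 0 < a t := fun t ht =>
      hpos t (hsubIcc ht) (ne_of_gt (lt_of_lt_of_le hsx₀ ht.1))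
    have hsqCont : ContinuousOn (fun t => Real.sqrt (a t)) (Icc s 1) :=
      Real.continuous_sqrt.comp_continuousOn (haCont.mono hsubIcc)
    have hfCont : ContinuousOn f (Icc s 1) :=
      hsqCont.inv₀ (fun t ht => ne_of_gt (Real.sqrt_pos.2 (hpos' t ht)))
    have hfM : AEStronglyMeasurable f (volume.restrict (Ioc s 1)) :=
      ((hfCont.mono Ioc_subset_Icc_self).aemeasurable measurableSet_Ioc).aestronglyMeasurable
    have hgM : AEStronglyMeasurable g (volume.restrict (Ioc s 1)) :=
      ((((hsqCont.mono Ioc_subset_Icc_self).aemeasurable measurableSet_Ioc)).mul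
        (measurable_deriv v).aemeasurable).aestronglyMeasurable
    have hf2 : IntegrableOn (fun t => f t ^ 2) (Ioc s 1) :=
      ((hfCont.pow 2).integrableOn_Icc).mono_set Ioc_subset_Icc_self
    have hg2 : IntegrableOn (fun t => g t ^ 2) (Ioc s 1) := by
      apply ((hav'Icc.mono_set (fun t ht => hsubIcc (Ioc_subset_Icc_self ht)))).congr
      filter_upwards [ae_restrict_mem measurableSet_Ioc] with t ht
      rw [hgdef]
      simp only
      rw [mul_pow, Real.sq_sqrt (hanneg t (hsubIcc (Ioc_subset_Icc_self ht)))]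
    have hkey : ∫ t in Ioc s 1, |deriv v t|
        ≤ Real.sqrt (∫ t in Ioc s 1, f t ^ 2) * Real.sqrt (∫ t in Ioc s 1, g t ^ 2) := by
      have he : EqOn (fun t => |deriv v t|) (fun t => |f t * g t|) (Ioc s 1) := by
        intro t ht
        have hat : 0 < a t := hpos' t (Ioc_subset_Icc_self ht)
        simp only [hfdef, hgdef]
        rw [← mul_assoc, inv_mul_cancel₀ (ne_of_gt (Real.sqrt_pos.2 hat)), one_mul]
      rw [setIntegral_congr_fun measurableSet_Ioc he]
      exact cs_abs_le hfM hgM hf2 hg2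
    have hfact1 : ∫ t in Ioc s 1, f t ^ 2 ≤ c₀⁻¹ * ((s - x₀)^(1-κ)/(κ-1)) := by
      have hcont2 : ContinuousOn (fun t : ℝ => c₀⁻¹ * (t - x₀)^(-κ)) (Icc s 1) :=
        continuousOn_const.mul ((continuousOn_id.sub continuousOn_const).rpow_const
          (fun t ht => Or.inl (ne_of_gt (show (0:ℝ) < t - x₀ by linarith [ht.1]))))
      calc ∫ t in Ioc s 1, f t ^ 2 ≤ ∫ t in Ioc s 1, c₀⁻¹ * (t - x₀)^(-κ) := by
            apply setIntegral_mono_on hf2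
              ((hcont2.integrableOn_Icc).mono_set Ioc_subset_Icc_self) measurableSet_Ioc
            intro t ht
            have hat : 0 < a t := hpos' t (Ioc_subset_Icc_self ht)
            have htx : (0:ℝ) < t - x₀ := by linarith [ht.1]
            have hlow' : c₀ * (t - x₀)^κ ≤ a t := by
              have := hlow t (hsubIcc (Ioc_subset_Icc_self ht))
              rwa [abs_of_pos htx] at this
            have hfv : f t ^ 2 = (a t)⁻¹ := by
              simp only [hfdef]
              rw [inv_pow, Real.sq_sqrt hat.le]
            rw [hfv, Real.rpow_neg htx.le, ← mul_inv]
            exact inv_anti₀ (mul_pos hc₀ (Real.rpow_pos_of_pos htx _)) hlow'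
        _ = c₀⁻¹ * ∫ t in Ioc s 1, (t - x₀)^(-κ) := MeasureTheory.integral_const_mul _ _
        _ ≤ c₀⁻¹ * ((s - x₀)^(1-κ)/(κ-1)) :=
            mul_le_mul_of_nonneg_left (hIR s hs) (inv_nonneg.2 hc₀.le)
    have hfact2 : ∫ t in Ioc s 1, g t ^ 2 ≤ ∫ t in Ioo (0:ℝ) 1, a t * (deriv v t)^2 := by
      have he2 : EqOn (fun t => g t ^ 2) (fun t => a t * (deriv v t)^2) (Ioc s 1) := by
        intro t ht
        simp only [hgdef]
        rw [mul_pow, Real.sq_sqrt (hanneg t (hsubIcc (Ioc_subset_Icc_self ht)))]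
      rw [setIntegral_congr_fun measurableSet_Ioc he2,
        show (∫ t in Ioo (0:ℝ) 1, a t * (deriv v t)^2)
          = ∫ t in Icc (0:ℝ) 1, a t * (deriv v t)^2 from (integral_Icc_eq_integral_Ioo).symm]
      apply setIntegral_mono_set hav'Icc
      · filter_upwards [ae_restrict_mem measurableSet_Icc] with t ht
        exact mul_nonneg (hanneg t ht) (sq_nonneg _)
      · exact HasSubset.Subset.eventuallyLE (fun t ht => hsubIcc (Ioc_subset_Icc_self ht))
    have habs : |v s| ≤ |v 1| + ∫ t in Ioc s 1, |deriv v t| := by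
      have : v s = v 1 - ∫ t in s..(1:ℝ), deriv v t := by rw [hrep]; ring
      rw [this]
      refine (abs_sub _ _).trans ?_
      have h1 := intervalIntegral.abs_integral_le_integral_abs (f := deriv v)
        (a := s) (b := (1:ℝ)) (μ := volume) hs1
      have h2 : (∫ t in s..(1:ℝ), |deriv v t|) = ∫ t in Ioc s 1, |deriv v t| :=
        intervalIntegral.integral_of_le hs1
      rw [h2] at h1
      linarith
    have hB : Real.sqrt (∫ t in Ioc s 1, g t ^ 2) ≤ M₃ := by
      rw [hM₃def]
      exact Real.sqrt_le_sqrt hfact2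
    have hA : Real.sqrt (∫ t in Ioc s 1, f t ^ 2)
        ≤ Real.sqrt (c₀⁻¹ * ((s - x₀)^(1-κ)/(κ-1))) := Real.sqrt_le_sqrt hfact1
    calc |v s| ≤ |v 1| + ∫ t in Ioc s 1, |deriv v t| := habs
      _ ≤ |v 1| + Real.sqrt (∫ t in Ioc s 1, f t ^ 2) * Real.sqrt (∫ t in Ioc s 1, g t ^ 2) := by
          linarith
      _ ≤ |v 1| + M₃ * Real.sqrt (c₀⁻¹ * ((s - x₀)^(1-κ)/(κ-1))) := by
          have := mul_le_mul hA hB (Real.sqrt_nonneg _) (Real.sqrt_nonneg _)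
          rw [mul_comm M₃ _]
          linarith
  -- integrability of the two products
  have h1int : IntegrableOn (fun x => deriv w x * v x) (Ioo 0 1) :=
    cs_integrable hw'Meas hvMeas hw'2 hvL2
  set q : ℝ → ℝ := fun x => |x - x₀| ^ ((1-κ)/2) with hqdef
  have hqM : AEStronglyMeasurable q (volume.restrict (Ioo 0 1)) := by
    have hContq : ContinuousOn q ((Ioo (0:ℝ) 1) \ {x₀}) := by
      apply ContinuousOn.rpow_const
      · exact (continuous_abs.comp (continuous_id.sub continuous_const)).continuousOn
      · intro t ht
        exact Or.inl (abs_ne_zero.2 (sub_ne_zero.2 (fun h => ht.2 (by simp [h]))))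
    have hres : volume.restrict (Ioo (0:ℝ) 1) = volume.restrict ((Ioo (0:ℝ) 1) \ {x₀}) := by
      apply Measure.restrict_congr_set
      exact ((diff_ae_eq_self (s := Ioo (0:ℝ) 1) (t := ({x₀} : Set ℝ))).2
        (measure_mono_null inter_subset_right (measure_singleton x₀))).symm
    rw [hres]
    exact ((hContq.aemeasurable
      (measurableSet_Ioo.diff (measurableSet_singleton x₀)))).aestronglyMeasurable
  have hq2 : IntegrableOn (fun x => q x ^ 2) (Ioo 0 1) := by
    have hq2eq : ∀ x : ℝ, q x ^ 2 = |x - x₀| ^ ((1:ℝ)-κ) := by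
      intro x
      rw [hqdef]
      simp only
      rw [← Real.rpow_natCast (|x - x₀| ^ ((1-κ)/2)) 2, ← Real.rpow_mul (abs_nonneg _)]
      norm_num
    have hLL : IntegrableOn (fun x => (x₀ - x) ^ ((1:ℝ)-κ)) (Ioc 0 x₀) := by
      have h0 : IntervalIntegrable (fun y : ℝ => y ^ ((1:ℝ)-κ)) volume x₀ 0 :=
        intervalIntegral.intervalIntegrable_rpow' (by linarith)
      have h1 := h0.comp_sub_left x₀
      simp only [sub_self, sub_zero] at h1
      exact (intervalIntegrable_iff_integrableOn_Ioc_of_le h0x₀.le).1 h1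
    have hRR : IntegrableOn (fun x => (x - x₀) ^ ((1:ℝ)-κ)) (Ioc x₀ 1) := by
      have h0 : IntervalIntegrable (fun y : ℝ => y ^ ((1:ℝ)-κ)) volume 0 (1 - x₀) :=
        intervalIntegral.intervalIntegrable_rpow' (by linarith)
      have h1 := h0.comp_sub_right x₀
      simp only [zero_add, sub_add_cancel] at h1
      exact (intervalIntegrable_iff_integrableOn_Ioc_of_le hx₀1.le).1 h1
    have hsub : Ioo (0:ℝ) 1 ⊆ Ioc 0 x₀ ∪ Ioc x₀ 1 := by
      intro y hy
      rcases le_or_gt y x₀ with h|h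
      · exact Or.inl ⟨hy.1, h⟩
      · exact Or.inr ⟨h, hy.2.le⟩
    simp only [hq2eq]
    apply IntegrableOn.mono_set _ hsub
    apply IntegrableOn.union
    · apply hLL.congr_fun _ measurableSet_Ioc
      intro y hy
      show (x₀ - y) ^ ((1:ℝ)-κ) = |y - x₀| ^ ((1:ℝ)-κ)
      rw [show |y - x₀| = x₀ - y by
        rw [abs_sub_comm]; exact abs_of_nonneg (by linarith [hy.2])]
    · apply hRR.congr_fun _ measurableSet_Ioc
      intro y hy
      show (y - x₀) ^ ((1:ℝ)-κ) = |y - x₀| ^ ((1:ℝ)-κ)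
      rw [abs_of_pos (by linarith [hy.1] : (0:ℝ) < y - x₀)]
  have hsqam : AEStronglyMeasurable (fun x => Real.sqrt (a x) * deriv v x)
      (volume.restrict (Ioo 0 1)) :=
    ((Real.continuous_sqrt.measurable.comp_aemeasurable haMeas.aemeasurable).mul
      (measurable_deriv v).aemeasurable).aestronglyMeasurable
  have hsqa2 : IntegrableOn (fun x => (Real.sqrt (a x) * deriv v x) ^ 2) (Ioo 0 1) := by
    apply hav'2.congr
    filter_upwards [ae_restrict_mem measurableSet_Ioo] with t ht
    rw [mul_pow, Real.sq_sqrt (hanneg t (Ioo_subset_Icc_self ht))]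
  have h2int : IntegrableOn (fun x => w x * deriv v x) (Ioo 0 1) := by
    have hne : ∀ᵐ x ∂(volume.restrict (Ioo (0:ℝ) 1)), x ≠ x₀ := by
      apply ae_restrict_of_ae
      apply ae_iff.2
      have : {x : ℝ | ¬ x ≠ x₀} = {x₀} := by ext y; simp
      rw [this]
      exact measure_singleton x₀
    apply Integrable.mono'
      (((cs_integrable hqM hsqam hq2 hsqa2).abs).const_mul (M₂ * Real.sqrt c₀⁻¹))
      (hwMeas.mul (measurable_deriv v).aestronglyMeasurable)
    filter_upwards [ae_restrict_mem measurableSet_Ioo, hne] with x hx hxne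
    have hb1 : |w x| ≤ M₂ * Real.sqrt |x - x₀| := hwb x (Ioo_subset_Icc_self hx)
    have habs0 : (0:ℝ) < |x - x₀| := abs_pos.2 (sub_ne_zero.2 hxne)
    have hlow' : c₀ * |x - x₀| ^ κ ≤ a x := hlow x (Ioo_subset_Icc_self hx)
    have hq0 : 0 ≤ q x := Real.rpow_nonneg (abs_nonneg _) _
    have hsqa : Real.sqrt c₀ * |x - x₀| ^ (κ/2) ≤ Real.sqrt (a x) := by
      have h1 : Real.sqrt (c₀ * |x - x₀| ^ κ) ≤ Real.sqrt (a x) := Real.sqrt_le_sqrt hlow'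
      rw [Real.sqrt_mul hc₀.le] at h1
      rwa [show Real.sqrt (|x - x₀| ^ κ) = |x - x₀| ^ (κ/2) by
        rw [Real.sqrt_eq_rpow, ← Real.rpow_mul (abs_nonneg _)]
        congr 1
        ring] at h1
    have hkey2 : Real.sqrt |x - x₀| ≤ Real.sqrt c₀⁻¹ * (q x * Real.sqrt (a x)) := by
      have h2 : Real.sqrt c₀⁻¹ * (q x * (Real.sqrt c₀ * |x - x₀| ^ (κ/2)))
          = Real.sqrt |x - x₀| := by
        rw [hqdef]
        simp only
        rw [Real.sqrt_inv]
        rw [show ((Real.sqrt c₀)⁻¹ * (|x - x₀| ^ ((1-κ)/2) * (Real.sqrt c₀ * |x - x₀| ^ (κ/2))))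
            = ((Real.sqrt c₀)⁻¹ * Real.sqrt c₀) * (|x - x₀| ^ ((1-κ)/2) * |x - x₀| ^ (κ/2))
          by ring]
        rw [inv_mul_cancel₀ (ne_of_gt (Real.sqrt_pos.2 hc₀)), one_mul,
          ← Real.rpow_add habs0, Real.sqrt_eq_rpow]
        congr 1
        ring
      calc Real.sqrt |x - x₀|
          = Real.sqrt c₀⁻¹ * (q x * (Real.sqrt c₀ * |x - x₀| ^ (κ/2))) := h2.symm
        _ ≤ Real.sqrt c₀⁻¹ * (q x * Real.sqrt (a x)) := by
            apply mul_le_mul_of_nonneg_left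
              (mul_le_mul_of_nonneg_left hsqa hq0) (Real.sqrt_nonneg _)
    calc ‖w x * deriv v x‖ = |w x| * |deriv v x| := by rw [Real.norm_eq_abs, abs_mul]
      _ ≤ (M₂ * Real.sqrt |x - x₀|) * |deriv v x| :=
          mul_le_mul_of_nonneg_right hb1 (abs_nonneg _)
      _ ≤ (M₂ * (Real.sqrt c₀⁻¹ * (q x * Real.sqrt (a x)))) * |deriv v x| :=
          mul_le_mul_of_nonneg_right (mul_le_mul_of_nonneg_left hkey2 hM₂0) (abs_nonneg _)
      _ ≤ M₂ * Real.sqrt c₀⁻¹ * |q x * (Real.sqrt (a x) * deriv v x)| := by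
          rw [abs_mul, abs_mul, abs_of_nonneg hq0, abs_of_nonneg (Real.sqrt_nonneg (a x))]
          exact le_of_eq (by ring)
  set P : ℝ → ℝ := fun x => deriv w x * v x + w x * deriv v x with hPdef
  have hPint : IntegrableOn P (Ioo 0 1) := h1int.add h2int
  have hPIcc : IntegrableOn P (Icc 0 1) := (integrableOn_Icc_iff_integrableOn_Ioo).2 hPint
  -- boundary terms tend to zero
  have htendL : Tendsto (fun s => w s * v s) (𝓝[<] x₀) (𝓝 0) := by
    have hev : ∀ᶠ s in 𝓝[<] x₀, |w s * v s| ≤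
        M₂ * |v 0| * Real.sqrt (x₀ - s)
          + M₂ * M₃ * Real.sqrt (c₀⁻¹ * ((x₀ - s) ^ ((2:ℝ)-κ)) / (κ-1)) := by
      filter_upwards [Ioo_mem_nhdsLT h0x₀] with s hsm
      have hs0 : (0:ℝ) ≤ s := hsm.1.le
      have hsx₀ : s < x₀ := hsm.2
      have hwbs : |w s| ≤ M₂ * Real.sqrt (x₀ - s) := by
        have := hwb s ⟨hs0, by linarith⟩
        rwa [show |s - x₀| = x₀ - s by
          rw [abs_sub_comm]; exact abs_of_pos (by linarith)] at this
      have hvbs := hvbL s ⟨hs0, hsx₀⟩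
      have h1 : |w s * v s| ≤ (M₂ * Real.sqrt (x₀ - s))
          * (|v 0| + M₃ * Real.sqrt (c₀⁻¹ * ((x₀ - s) ^ ((1:ℝ)-κ)/(κ-1)))) := by
        rw [abs_mul]
        exact mul_le_mul hwbs hvbs (abs_nonneg _) (mul_nonneg hM₂0 (Real.sqrt_nonneg _))
      have h2 : Real.sqrt (x₀ - s) * Real.sqrt (c₀⁻¹ * ((x₀ - s) ^ ((1:ℝ)-κ)/(κ-1)))
          = Real.sqrt (c₀⁻¹ * ((x₀ - s) ^ ((2:ℝ)-κ)) / (κ-1)) := by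
        rw [← Real.sqrt_mul (by linarith : (0:ℝ) ≤ x₀ - s)]
        congr 1
        rw [show ((2:ℝ)-κ) = 1 + (1-κ) by ring,
          Real.rpow_add (by linarith : (0:ℝ) < x₀ - s), Real.rpow_one]
        ring
      calc |w s * v s| ≤ (M₂ * Real.sqrt (x₀ - s))
            * (|v 0| + M₃ * Real.sqrt (c₀⁻¹ * ((x₀ - s) ^ ((1:ℝ)-κ)/(κ-1)))) := h1
        _ = M₂ * |v 0| * Real.sqrt (x₀ - s) + M₂ * M₃
              * (Real.sqrt (x₀ - s) * Real.sqrt (c₀⁻¹ * ((x₀ - s) ^ ((1:ℝ)-κ)/(κ-1)))) := by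
            ring
        _ = M₂ * |v 0| * Real.sqrt (x₀ - s)
              + M₂ * M₃ * Real.sqrt (c₀⁻¹ * ((x₀ - s) ^ ((2:ℝ)-κ)) / (κ-1)) := by rw [h2]
    have hsub : Tendsto (fun s : ℝ => x₀ - s) (𝓝[<] x₀) (𝓝 0) := by
      have h : Tendsto (fun s : ℝ => x₀ - s) (𝓝 x₀) (𝓝 0) := by
        have := ((continuous_const (y := x₀)).sub continuous_id).tendsto x₀
        simpa [Pi.sub_def] using this
      exact h.mono_left nhdsWithin_le_nhds
    have h1 : Tendsto (fun s : ℝ => Real.sqrt (x₀ - s)) (𝓝[<] x₀) (𝓝 0) := by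
      have := (Real.continuous_sqrt.tendsto 0).comp hsub
      rwa [Real.sqrt_zero] at this
    have h2 : Tendsto (fun s : ℝ => (x₀ - s) ^ ((2:ℝ)-κ)) (𝓝[<] x₀) (𝓝 0) := by
      have hc := (Real.continuousAt_rpow_const 0 ((2:ℝ)-κ) (Or.inr (by linarith))).tendsto
      have := hc.comp hsub
      rwa [Real.zero_rpow (by linarith : ((2:ℝ)-κ) ≠ 0)] at this
    have h3 : Tendsto (fun s : ℝ => Real.sqrt (c₀⁻¹ * ((x₀ - s) ^ ((2:ℝ)-κ)) / (κ-1)))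
        (𝓝[<] x₀) (𝓝 0) := by
      have hlin : Tendsto (fun s : ℝ => c₀⁻¹ * ((x₀ - s) ^ ((2:ℝ)-κ)) / (κ-1))
          (𝓝[<] x₀) (𝓝 0) := by
        have := (h2.const_mul c₀⁻¹).div_const (κ-1)
        simpa using this
      have := (Real.continuous_sqrt.tendsto 0).comp hlin
      rwa [Real.sqrt_zero] at this
    have hb : Tendsto (fun s : ℝ => M₂ * |v 0| * Real.sqrt (x₀ - s)
        + M₂ * M₃ * Real.sqrt (c₀⁻¹ * ((x₀ - s) ^ ((2:ℝ)-κ)) / (κ-1))) (𝓝[<] x₀) (𝓝 0) := by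
      have := (h1.const_mul (M₂ * |v 0|)).add (h3.const_mul (M₂ * M₃))
      simpa using this
    exact squeeze_zero_norm'
      (by filter_upwards [hev] with s hs; simpa [Real.norm_eq_abs, abs_mul] using hs) hb
  have htendR : Tendsto (fun s => w s * v s) (𝓝[>] x₀) (𝓝 0) := by
    have hev : ∀ᶠ s in 𝓝[>] x₀, |w s * v s| ≤
        M₂ * |v 1| * Real.sqrt (s - x₀)
          + M₂ * M₃ * Real.sqrt (c₀⁻¹ * ((s - x₀) ^ ((2:ℝ)-κ)) / (κ-1)) := by
      filter_upwards [Ioo_mem_nhdsGT hx₀1] with s hsm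
      have hs1 : s ≤ 1 := hsm.2.le
      have hsx₀ : x₀ < s := hsm.1
      have hwbs : |w s| ≤ M₂ * Real.sqrt (s - x₀) := by
        have := hwb s ⟨by linarith, hs1⟩
        rwa [show |s - x₀| = s - x₀ from abs_of_pos (by linarith)] at this
      have hvbs := hvbR s ⟨hsx₀, hs1⟩
      have h1 : |w s * v s| ≤ (M₂ * Real.sqrt (s - x₀))
          * (|v 1| + M₃ * Real.sqrt (c₀⁻¹ * ((s - x₀) ^ ((1:ℝ)-κ)/(κ-1)))) := by
        rw [abs_mul]
        exact mul_le_mul hwbs hvbs (abs_nonneg _) (mul_nonneg hM₂0 (Real.sqrt_nonneg _))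
      have h2 : Real.sqrt (s - x₀) * Real.sqrt (c₀⁻¹ * ((s - x₀) ^ ((1:ℝ)-κ)/(κ-1)))
          = Real.sqrt (c₀⁻¹ * ((s - x₀) ^ ((2:ℝ)-κ)) / (κ-1)) := by
        rw [← Real.sqrt_mul (by linarith : (0:ℝ) ≤ s - x₀)]
        congr 1
        rw [show ((2:ℝ)-κ) = 1 + (1-κ) by ring,
          Real.rpow_add (by linarith : (0:ℝ) < s - x₀), Real.rpow_one]
        ring
      calc |w s * v s| ≤ (M₂ * Real.sqrt (s - x₀))
            * (|v 1| + M₃ * Real.sqrt (c₀⁻¹ * ((s - x₀) ^ ((1:ℝ)-κ)/(κ-1)))) := h1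
        _ = M₂ * |v 1| * Real.sqrt (s - x₀) + M₂ * M₃
              * (Real.sqrt (s - x₀) * Real.sqrt (c₀⁻¹ * ((s - x₀) ^ ((1:ℝ)-κ)/(κ-1)))) := by
            ring
        _ = M₂ * |v 1| * Real.sqrt (s - x₀)
              + M₂ * M₃ * Real.sqrt (c₀⁻¹ * ((s - x₀) ^ ((2:ℝ)-κ)) / (κ-1)) := by rw [h2]
    have hsub : Tendsto (fun s : ℝ => s - x₀) (𝓝[>] x₀) (𝓝 0) := by
      have h : Tendsto (fun s : ℝ => s - x₀) (𝓝 x₀) (𝓝 0) := by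
        have := (continuous_id.sub (continuous_const (y := x₀))).tendsto x₀
        simpa [Pi.sub_def] using this
      exact h.mono_left nhdsWithin_le_nhds
    have h1 : Tendsto (fun s : ℝ => Real.sqrt (s - x₀)) (𝓝[>] x₀) (𝓝 0) := by
      have := (Real.continuous_sqrt.tendsto 0).comp hsub
      rwa [Real.sqrt_zero] at this
    have h2 : Tendsto (fun s : ℝ => (s - x₀) ^ ((2:ℝ)-κ)) (𝓝[>] x₀) (𝓝 0) := by
      have hc := (Real.continuousAt_rpow_const 0 ((2:ℝ)-κ) (Or.inr (by linarith))).tendsto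
      have := hc.comp hsub
      rwa [Real.zero_rpow (by linarith : ((2:ℝ)-κ) ≠ 0)] at this
    have h3 : Tendsto (fun s : ℝ => Real.sqrt (c₀⁻¹ * ((s - x₀) ^ ((2:ℝ)-κ)) / (κ-1)))
        (𝓝[>] x₀) (𝓝 0) := by
      have hlin : Tendsto (fun s : ℝ => c₀⁻¹ * ((s - x₀) ^ ((2:ℝ)-κ)) / (κ-1))
          (𝓝[>] x₀) (𝓝 0) := by
        have := (h2.const_mul c₀⁻¹).div_const (κ-1)
        simpa using this
      have := (Real.continuous_sqrt.tendsto 0).comp hlin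
      rwa [Real.sqrt_zero] at this
    have hb : Tendsto (fun s : ℝ => M₂ * |v 1| * Real.sqrt (s - x₀)
        + M₂ * M₃ * Real.sqrt (c₀⁻¹ * ((s - x₀) ^ ((2:ℝ)-κ)) / (κ-1))) (𝓝[>] x₀) (𝓝 0) := by
      have := (h1.const_mul (M₂ * |v 1|)).add (h3.const_mul (M₂ * M₃))
      simpa using this
    exact squeeze_zero_norm'
      (by filter_upwards [hev] with s hs; simpa [Real.norm_eq_abs, abs_mul] using hs) hb
  -- integration by parts identities
  have hibpL : ∀ s ∈ Ioo (0:ℝ) x₀, (∫ t in Ioc 0 s, P t) = w s * v s := by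
    intro s hsm
    have hs0 : (0:ℝ) ≤ s := hsm.1.le
    have hACv := hvLAC.1 0 s le_rfl hs0 hsm.2
    have hFi : IntegrableOn (deriv w) (Ioc 0 s) := by
      rw [← intervalIntegrable_iff_integrableOn_Ioc_of_le hs0]
      apply hwAC.1.mono_set
      rw [uIcc_of_le hs0, uIcc_of_le zero_le_one]
      exact Icc_subset_Icc le_rfl (by linarith [hsm.2, hx₀1])
    have hGi : IntegrableOn (deriv v) (Ioc 0 s) :=
      (intervalIntegrable_iff_integrableOn_Ioc_of_le hs0).1 hACv.1
    have hfrep : ∀ x ∈ Icc (0:ℝ) s, w x = w 0 + ∫ t in Ioc 0 x, deriv w t := by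
      intro x hxm
      have := hwAC.2 x ⟨hxm.1, hxm.2.trans (by linarith [hsm.2, hx₀1])⟩
      rwa [intervalIntegral.integral_of_le hxm.1] at this
    have hgrep : ∀ x ∈ Icc (0:ℝ) s, v x = v 0 + ∫ t in Ioc 0 x, deriv v t := by
      intro x hxm
      have := hACv.2 x hxm
      rwa [intervalIntegral.integral_of_le hxm.1] at this
    have hfin := ibp_ftc hs0 hFi hGi hfrep hgrep
    rw [hw0, zero_mul, sub_zero] at hfin
    exact hfin
  have hibpR : ∀ s ∈ Ioo x₀ 1, (∫ t in Ioc s 1, P t) = -(w s * v s) := by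
    intro s hsm
    have hs1 : s ≤ 1 := hsm.2.le
    have hACv := hvLAC.2 s 1 hsm.1 hs1 le_rfl
    have hFi : IntegrableOn (deriv w) (Ioc s 1) := by
      rw [← intervalIntegrable_iff_integrableOn_Ioc_of_le hs1]
      apply hwAC.1.mono_set
      rw [uIcc_of_le hs1, uIcc_of_le zero_le_one]
      exact Icc_subset_Icc (by linarith [hsm.1, h0x₀]) le_rfl
    have hGi : IntegrableOn (deriv v) (Ioc s 1) :=
      (intervalIntegrable_iff_integrableOn_Ioc_of_le hs1).1 hACv.1
    have hfrep : ∀ x ∈ Icc s 1, w x = w s + ∫ t in Ioc s x, deriv w t := by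
      intro x hxm
      have hs01 : s ∈ Icc (0:ℝ) 1 := ⟨by linarith [hsm.1, h0x₀], hs1⟩
      have hx01 : x ∈ Icc (0:ℝ) 1 := ⟨by linarith [hxm.1, hsm.1, h0x₀], hxm.2⟩
      have := ACOn.rep_sub hwAC hs01 hx01
      rwa [intervalIntegral.integral_of_le hxm.1] at this
    have hgrep : ∀ x ∈ Icc s 1, v x = v s + ∫ t in Ioc s x, deriv v t := by
      intro x hxm
      have := hACv.2 x hxm
      rwa [intervalIntegral.integral_of_le hxm.1] at this
    have hfin := ibp_ftc hs1 hFi hGi hfrep hgrep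
    rw [hw1, zero_mul, zero_sub] at hfin
    exact hfin
  -- the two half-interval claims
  have claimL : (∫ t in Ioc 0 x₀, P t) = 0 := by
    have hprim : Tendsto (fun s => ∫ t in Ioc 0 s, P t) (𝓝[<] x₀)
        (𝓝 (∫ t in Ioc 0 x₀, P t)) := by
      have hc := intervalIntegral.continuousOn_primitive (f := P) (a := 0) (b := x₀) (μ := volume)
        (hPIcc.mono_set (Icc_subset_Icc le_rfl hx₀1.le))
      have hcwa := hc x₀ ⟨h0x₀.le, le_rfl⟩
      have hle : 𝓝[<] x₀ ≤ 𝓝[Icc (0:ℝ) x₀] x₀ := by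
        apply nhdsWithin_le_iff.2
        apply Filter.mem_of_superset (inter_mem_nhdsWithin (Iio x₀) (Ioi_mem_nhds h0x₀))
        rintro y ⟨hy1, hy2⟩
        exact ⟨hy2.le, hy1.le⟩
      exact hcwa.mono_left hle
    have heq : (fun s => w s * v s) =ᶠ[𝓝[<] x₀] (fun s => ∫ t in Ioc 0 s, P t) := by
      filter_upwards [Ioo_mem_nhdsLT h0x₀] with s hs
      exact (hibpL s hs).symm
    have h2 : Tendsto (fun s => ∫ t in Ioc 0 s, P t) (𝓝[<] x₀) (𝓝 0) :=
      Tendsto.congr' heq htendL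
    exact tendsto_nhds_unique hprim h2
  have claimR : (∫ t in Ioc x₀ 1, P t) = 0 := by
    have hsplit : ∀ s ∈ Icc x₀ 1,
        (∫ t in Ioc s 1, P t) = (∫ t in Ioc x₀ 1, P t) - ∫ t in Ioc x₀ s, P t := by
      intro s hsm
      have hunion : Ioc x₀ s ∪ Ioc s 1 = Ioc x₀ 1 := Ioc_union_Ioc_eq_Ioc hsm.1 hsm.2
      have hint1 : IntegrableOn P (Ioc x₀ s) :=
        hPIcc.mono_set (fun t ht => ⟨(h0x₀.trans ht.1).le, ht.2.trans hsm.2⟩)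
      have hint2 : IntegrableOn P (Ioc s 1) :=
        hPIcc.mono_set (fun t ht => ⟨(h0x₀.trans (lt_of_le_of_lt hsm.1 ht.1)).le, ht.2⟩)
      have hu := setIntegral_union (Ioc_disjoint_Ioc_of_le le_rfl) measurableSet_Ioc hint1 hint2
      rw [hunion] at hu
      linarith [hu]
    have hprim0 : Tendsto (fun s => ∫ t in Ioc x₀ s, P t) (𝓝[>] x₀) (𝓝 0) := by
      have hc := intervalIntegral.continuousOn_primitive (f := P) (a := x₀) (b := 1) (μ := volume)
        (hPIcc.mono_set (Icc_subset_Icc h0x₀.le le_rfl))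
      have hcwa := hc x₀ ⟨le_rfl, hx₀1.le⟩
      have hle : 𝓝[>] x₀ ≤ 𝓝[Icc x₀ 1] x₀ := by
        apply nhdsWithin_le_iff.2
        apply Filter.mem_of_superset (inter_mem_nhdsWithin (Ioi x₀) (Iio_mem_nhds hx₀1))
        rintro y ⟨hy1, hy2⟩
        exact ⟨hy1.le, hy2.le⟩
      have hval : (∫ t in Ioc x₀ x₀, P t) = 0 := by simp
      have h' : Tendsto (fun s => ∫ t in Ioc x₀ s, P t) (𝓝[>] x₀)
          (𝓝 (∫ t in Ioc x₀ x₀, P t)) := hcwa.mono_left hle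
      rwa [hval] at h'
    have hprim : Tendsto (fun s => ∫ t in Ioc s 1, P t) (𝓝[>] x₀)
        (𝓝 (∫ t in Ioc x₀ 1, P t)) := by
      have heq' : (fun s => (∫ t in Ioc x₀ 1, P t) - ∫ t in Ioc x₀ s, P t)
          =ᶠ[𝓝[>] x₀] (fun s => ∫ t in Ioc s 1, P t) := by
        filter_upwards [Ioo_mem_nhdsGT
          hx₀1] with s hs
        exact (hsplit s ⟨hs.1.le, hs.2.le⟩).symm
      have h0 : Tendsto (fun s => (∫ t in Ioc x₀ 1, P t) - ∫ t in Ioc x₀ s, P t)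
          (𝓝[>] x₀) (𝓝 ((∫ t in Ioc x₀ 1, P t) - 0)) := tendsto_const_nhds.sub hprim0
      rw [sub_zero] at h0
      exact Tendsto.congr' heq' h0
    have heq : (fun s => -(w s * v s)) =ᶠ[𝓝[>] x₀] (fun s => ∫ t in Ioc s 1, P t) := by
      filter_upwards [Ioo_mem_nhdsGT
        hx₀1] with s hs
      exact (hibpR s hs).symm
    have h2 : Tendsto (fun s => ∫ t in Ioc s 1, P t) (𝓝[>] x₀) (𝓝 0) := by
      have hneg := htendR.neg
      rw [neg_zero] at hneg
      exact Tendsto.congr' heq hneg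
    exact tendsto_nhds_unique hprim h2
  -- combine everything
  have htot : (∫ t in Ioo (0:ℝ) 1, P t) = 0 := by
    have hunion : Ioc (0:ℝ) x₀ ∪ Ioc x₀ 1 = Ioc 0 1 := Ioc_union_Ioc_eq_Ioc h0x₀.le hx₀1.le
    have hint1 : IntegrableOn P (Ioc 0 x₀) :=
      hPIcc.mono_set (fun t ht => ⟨ht.1.le, ht.2.trans hx₀1.le⟩)
    have hint2 : IntegrableOn P (Ioc x₀ 1) :=
      hPIcc.mono_set (fun t ht => ⟨(h0x₀.trans ht.1).le, ht.2⟩)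
    have hu := setIntegral_union (Ioc_disjoint_Ioc_of_le le_rfl) measurableSet_Ioc hint1 hint2
    rw [hunion] at hu
    rw [show (∫ t in Ioo (0:ℝ) 1, P t) = ∫ t in Ioc (0:ℝ) 1, P t from
      (integral_Ioc_eq_integral_Ioo).symm, hu, claimL, claimR, add_zero]
  have hsum : (∫ x in Ioo (0:ℝ) 1, deriv w x * v x)
      + (∫ x in Ioo (0:ℝ) 1, w x * deriv v x) = 0 := by
    rw [← integral_add h1int h2int]
    exact htot
  have hrw : (∫ x in Ioo (0:ℝ) 1, a x * deriv u x * deriv v x)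
      = ∫ x in Ioo (0:ℝ) 1, w x * deriv v x := rfl
  rw [hrw]
  linarith [hsum]
end

section
/- Let a be weakly degenerate at x₀ ∈ (0,1). Then the spaces H¹_{1/a}(0,1) and H¹(0,1) coincide algebraically (in particular every u ∈ H¹(0,1) satisfies ∫₀¹ u²/a dx < ∞), and the two norms are equivalent: there exists C ≥ 1 such that for all u ∈ H¹(0,1), (1/C)(∫₀¹ u² dx + ∫₀¹ (u')² dx) ≤ ∫₀¹ u²/a dx + ∫₀¹ (u')² dx ≤ C (∫₀¹ u² dx + ∫₀¹ (u')² dx). -/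
open MeasureTheory Set Filter
set_option maxRecDepth 8000

lemma my_parts {f f' w : ℝ → ℝ} {c d M : ℝ}
    (hint : IntegrableOn f' (Set.Ioc c d))
    (hmf' : Measurable f') (hmw : Measurable w) (hM : 0 ≤ M)
    (hwb : ∀ s ∈ Set.Ioc c d, |w s| ≤ M)
    (hfw : IntegrableOn (fun s => f s * w s) (Set.Ioc c d))
    (hf : ∀ s ∈ Set.Ioc c d, f s = f c + ∫ t in Set.Ioc c s, f' t) :
    ∫ s in Set.Ioc c d, f s * w s
      = f c * (∫ s in Set.Ioc c d, w s)
        + ∫ t in Set.Ioc c d, f' t * (∫ s in Set.Ioc t d, w s) := by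
  set ν := volume.restrict (Set.Ioc c d) with hν
  haveI : IsFiniteMeasure ν := by
    constructor
    rw [hν, Measure.restrict_apply_univ]
    exact measure_Ioc_lt_top
  -- integrability of w
  have hw_int : IntegrableOn w (Set.Ioc c d) := by
    refine Integrable.mono' (integrable_const M) hmw.aestronglyMeasurable.restrict ?_
    filter_upwards [ae_restrict_mem measurableSet_Ioc] with s hs
    exact hwb s hs
  -- the kernel
  set F : ℝ → ℝ → ℝ := fun s t => (Set.Ioc c s).indicator f' t * w s with hF
  have hFmeas : Measurable (Function.uncurry F) := by
    have : Function.uncurry F = fun p : ℝ × ℝ =>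
        Set.indicator {q : ℝ × ℝ | c < q.2 ∧ q.2 ≤ q.1} (fun q => f' q.2) p * w p.1 := by
      funext p
      simp only [Function.uncurry, hF, Set.indicator, Set.mem_Ioc, Set.mem_setOf_eq]
    rw [this]
    refine Measurable.mul ?_ (hmw.comp measurable_fst)
    refine Measurable.indicator (hmf'.comp measurable_snd) ?_
    exact MeasurableSet.inter (measurableSet_lt measurable_const measurable_snd)
      (measurableSet_le measurable_snd measurable_fst)
  have hsnd : Integrable (fun p : ℝ × ℝ => f' p.2) (ν.prod ν) := by
    have hmap : Measure.map Prod.snd (ν.prod ν) = (ν Set.univ) • ν := Measure.map_snd_prod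
    have h1 : Integrable f' ((ν Set.univ) • ν) := by
      refine Integrable.smul_measure ?_ (measure_ne_top _ _)
      exact hint
    rw [← hmap] at h1
    exact (integrable_map_measure (hmf'.aestronglyMeasurable) measurable_snd.aemeasurable).mp h1
  have hFint : Integrable (Function.uncurry F) (ν.prod ν) := by
    refine Integrable.mono' (g := fun p : ℝ × ℝ => M * |f' p.2|) (hsnd.abs.const_mul M)
      hFmeas.aestronglyMeasurable ?_
    have hprod : ν.prod ν = (volume.prod volume).restrict ((Set.Ioc c d) ×ˢ (Set.Ioc c d)) := by
      rw [hν, Measure.prod_restrict]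
    rw [hprod]
    filter_upwards [ae_restrict_mem (measurableSet_Ioc.prod measurableSet_Ioc)] with p hp
    have h1 : |(Set.Ioc c p.1).indicator f' p.2| ≤ |f' p.2| := by
      by_cases h : p.2 ∈ Set.Ioc c p.1
      · rw [Set.indicator_of_mem h]
      · rw [Set.indicator_of_notMem h]; simp [abs_nonneg]
    calc ‖F p.1 p.2‖ = |(Set.Ioc c p.1).indicator f' p.2| * |w p.1| := by
          rw [Real.norm_eq_abs, hF]; exact abs_mul _ _
      _ ≤ |f' p.2| * M := mul_le_mul h1 (hwb p.1 hp.1) (abs_nonneg _) (abs_nonneg _)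
      _ = M * |f' p.2| := mul_comm _ _
  have swap : ∫ s, (∫ t, F s t ∂ν) ∂ν = ∫ t, (∫ s, F s t ∂ν) ∂ν :=
    integral_integral_swap hFint
  -- left side identification
  have hL : ∀ s ∈ Set.Ioc c d, (∫ t, F s t ∂ν) = (f s - f c) * w s := by
    intro s hs
    have h1 : (∫ t, (Set.Ioc c s).indicator f' t ∂ν) = ∫ t in Set.Ioc c s, f' t := by
      rw [hν, integral_indicator measurableSet_Ioc, Measure.restrict_restrict measurableSet_Ioc]
      congr 1
      rw [Set.Ioc_inter_Ioc, max_self, min_eq_left hs.2]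
    calc (∫ t, F s t ∂ν) = (∫ t, (Set.Ioc c s).indicator f' t ∂ν) * w s := by
          rw [hF]; exact integral_mul_const _ _
      _ = (∫ t in Set.Ioc c s, f' t) * w s := by rw [h1]
      _ = (f s - f c) * w s := by rw [hf s hs]; ring
  -- right side identification
  have hR : ∀ t ∈ Set.Ioc c d, (∫ s, F s t ∂ν) = f' t * (∫ s in Set.Ioc t d, w s) := by
    intro t ht
    have h1 : ∀ s, F s t = (Set.Ici t).indicator (fun s' => f' t * w s') s := by
      intro s
      by_cases h : t ≤ s
      · rw [Set.indicator_of_mem (Set.mem_Ici.mpr h), hF]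
        simp only []
        rw [Set.indicator_of_mem (Set.mem_Ioc.mpr ⟨ht.1, h⟩)]
      · rw [Set.indicator_of_notMem (fun hc => h (Set.mem_Ici.mp hc)), hF]
        simp only []
        rw [Set.indicator_of_notMem (fun hc => h (Set.mem_Ioc.mp hc).2), zero_mul]
    calc (∫ s, F s t ∂ν) = ∫ s, (Set.Ici t).indicator (fun s' => f' t * w s') s ∂ν := by
          simp_rw [h1]
      _ = ∫ s in Set.Ici t, f' t * w s ∂ν := integral_indicator measurableSet_Ici
      _ = ∫ s in Set.Ioc t d, f' t * w s := by
          rw [hν, Measure.restrict_restrict measurableSet_Ici]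
          have : Set.Ici t ∩ Set.Ioc c d = Set.Icc t d := by
            ext s
            simp only [Set.mem_inter_iff, Set.mem_Ici, Set.mem_Ioc, Set.mem_Icc]
            constructor
            · rintro ⟨h1', _, h3'⟩; exact ⟨h1', h3'⟩
            · rintro ⟨h1', h2'⟩; exact ⟨h1', lt_of_lt_of_le ht.1 h1', h2'⟩
          rw [this, integral_Icc_eq_integral_Ioc]
      _ = f' t * (∫ s in Set.Ioc t d, w s) := integral_const_mul _ _
  have e1 : ∫ s in Set.Ioc c d, (f s - f c) * w s
      = ∫ t in Set.Ioc c d, f' t * (∫ s in Set.Ioc t d, w s) := by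
    calc ∫ s in Set.Ioc c d, (f s - f c) * w s
        = ∫ s, (∫ t, F s t ∂ν) ∂ν := by
          rw [hν]
          exact (setIntegral_congr_fun measurableSet_Ioc hL).symm ▸ rfl
      _ = ∫ t, (∫ s, F s t ∂ν) ∂ν := swap
      _ = ∫ t in Set.Ioc c d, f' t * (∫ s in Set.Ioc t d, w s) := by
          rw [hν] at *
          exact setIntegral_congr_fun measurableSet_Ioc hR
  have e2 : ∫ s in Set.Ioc c d, (f s - f c) * w s
      = (∫ s in Set.Ioc c d, f s * w s) - f c * (∫ s in Set.Ioc c d, w s) := by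
    have : ∀ s : ℝ, (f s - f c) * w s = f s * w s - f c * w s := fun s => by ring
    simp_rw [this]
    rw [integral_sub hfw (hw_int.const_mul (f c))]
    rw [integral_const_mul]
  rw [e2] at e1
  linarith

lemma meas_abs_rpow (x₀ c : ℝ) : Measurable (fun t : ℝ => |t - x₀| ^ c) := by
  measurability

lemma bound_right {a : ℝ → ℝ} {x₀ K : ℝ} (hx₀ : x₀ ∈ Set.Ioo (0:ℝ) 1) (hK : K ∈ Set.Ioo (0:ℝ) 1)
    (hint : IntervalIntegrable (deriv a) volume 0 1)
    (hrep : ∀ y ∈ Set.Icc (0:ℝ) 1, a y = a 0 + ∫ t in (0:ℝ)..y, deriv a t)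
    (hae : ∀ᵐ t ∂(volume.restrict (Set.Icc (0:ℝ) 1)), (t - x₀) * deriv a t ≤ K * a t)
    {x : ℝ} (hx1 : x₀ < x) (hx2 : x ≤ 1) :
    a 1 * (1 - x₀) ^ (-K) * (x - x₀) ^ K ≤ a x := by
  have hKpos : 0 < K := hK.1
  have hxpos : (0:ℝ) < x - x₀ := by linarith
  have hx0lt : (0:ℝ) < x := lt_trans hx₀.1 hx1
  set c₁ : ℝ := (1 - x₀) ^ (-K) with hc₁
  have hc₁nn : 0 ≤ c₁ := Real.rpow_nonneg (by linarith [hx₀.2]) _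
  -- trivial case x = 1
  rcases eq_or_lt_of_le hx2 with rfl | hxlt
  · have : (1 - x₀) ^ (-K) * (1 - x₀) ^ K = 1 := by
      rw [← Real.rpow_add (by linarith [hx₀.2])]
      norm_num
    exact le_of_eq (by rw [mul_assoc, this, mul_one])
  -- main case x < 1
  have hxmem : x ∈ Set.Icc (0:ℝ) 1 := ⟨hx0lt.le, hx2⟩
  set w : ℝ → ℝ := fun s => |s - x₀| ^ (-K - 1) with hw
  have hmw : Measurable w := meas_abs_rpow x₀ (-K - 1)
  have hint' : IntegrableOn (deriv a) (Set.Ioc x 1) := by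
    have h0 : IntegrableOn (deriv a) (Set.Ioc 0 1) :=
      (intervalIntegrable_iff_integrableOn_Ioc_of_le (by norm_num)).mp hint
    exact h0.mono_set (Set.Ioc_subset_Ioc_left hx0lt.le)
  set M : ℝ := (x - x₀) ^ (-K - 1) with hMdef
  have hM : 0 ≤ M := Real.rpow_nonneg hxpos.le _
  have hwb : ∀ s ∈ Set.Ioc x 1, |w s| ≤ M := by
    intro s hs
    have hs0 : 0 < s - x₀ := by linarith [hs.1]
    have h1 : |s - x₀| = s - x₀ := abs_of_pos hs0
    show abs (|s - x₀| ^ (-K - 1)) ≤ M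
    rw [h1, abs_of_nonneg (Real.rpow_nonneg hs0.le _)]
    exact Real.rpow_le_rpow_of_nonpos hxpos (by linarith [hs.1]) (by linarith)
  -- continuous rep of a
  set A : ℝ → ℝ := fun y => a 0 + ∫ t in (0:ℝ)..y, deriv a t with hA
  have hIccInt : IntegrableOn (deriv a) (Set.Icc 0 1) :=
    Iff.mpr integrableOn_Icc_iff_integrableOn_Ioc
      ((intervalIntegrable_iff_integrableOn_Ioc_of_le (by norm_num)).mp hint)
  have hAcont : ContinuousOn A (Set.Icc 0 1) := by
    refine continuousOn_const.add ?_
    have := intervalIntegral.continuousOn_primitive_interval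
      (a := (0:ℝ)) (b := (1:ℝ)) (f := deriv a) (μ := volume) ?_
    · rwa [Set.uIcc_of_le (by norm_num : (0:ℝ) ≤ 1)] at this
    · rwa [Set.uIcc_of_le (by norm_num : (0:ℝ) ≤ 1)]
  have haA : ∀ y ∈ Set.Icc (0:ℝ) 1, a y = A y := hrep
  have hwcont : ContinuousOn w (Set.Icc x 1) := by
    refine ContinuousOn.rpow_const ?_ ?_
    · exact (continuous_abs.comp (continuous_id.sub continuous_const)).continuousOn
    · intro s hs
      left
      have : 0 < s - x₀ := by linarith [hs.1]
      show |s - x₀| ≠ 0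
      positivity
  have hIccx1 : Set.Icc x 1 ⊆ Set.Icc (0:ℝ) 1 := Set.Icc_subset_Icc hx0lt.le le_rfl
  have hfw : IntegrableOn (fun s => a s * w s) (Set.Ioc x 1) := by
    have h1 : IntegrableOn (fun s => A s * w s) (Set.Icc x 1) :=
      ((hAcont.mono hIccx1).mul hwcont).integrableOn_compact isCompact_Icc
    refine IntegrableOn.congr_fun (h1.mono_set Set.Ioc_subset_Icc_self) ?_ measurableSet_Ioc
    intro s hs
    show A s * w s = a s * w s
    rw [haA s (hIccx1 (Set.Ioc_subset_Icc_self hs))]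
  have hsubII : ∀ {p q : ℝ}, 0 ≤ p → p ≤ q → q ≤ 1 → IntervalIntegrable (deriv a) volume p q := by
    intro p q hp hpq hq
    refine hint.mono_set ?_
    rw [Set.uIcc_of_le (by norm_num : (0:ℝ) ≤ 1), Set.uIcc_of_le hpq]
    exact Set.Icc_subset_Icc hp hq
  have hf : ∀ s ∈ Set.Ioc x 1, a s = a x + ∫ t in Set.Ioc x s, deriv a t := by
    intro s hs
    have hsmem : s ∈ Set.Icc (0:ℝ) 1 := ⟨le_of_lt (lt_trans hx0lt hs.1), hs.2⟩
    have h1 := hrep s hsmem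
    have h2 := hrep x hxmem
    have h3 : (∫ t in (0:ℝ)..s, deriv a t) - (∫ t in (0:ℝ)..x, deriv a t)
        = ∫ t in x..s, deriv a t :=
      intervalIntegral.integral_interval_sub_left (hsubII le_rfl hsmem.1 hsmem.2)
        (hsubII le_rfl hxmem.1 hxmem.2)
    rw [intervalIntegral.integral_of_le hs.1.le] at h3
    linarith
  have ha1xEq : (∫ t in Set.Ioc x 1, deriv a t) = a 1 - a x := by
    have := hf 1 ⟨hxlt, le_rfl⟩; linarith
  have hparts := my_parts (f := a) hint' (measurable_deriv a) hmw hM hwb hfw hf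
  have Wfun : ∀ t ∈ Set.Icc x 1, (∫ s in Set.Ioc t 1, w s)
      = (|t - x₀| ^ (-K) - c₁) / K := by
    intro t ht
    have ht0 : 0 < t - x₀ := by linarith [ht.1]
    rw [← intervalIntegral.integral_of_le ht.2]
    have hcongr : Set.EqOn w (fun s => (s - x₀) ^ (-K - 1)) (Set.uIcc t 1) := by
      intro s hs
      rw [Set.uIcc_of_le ht.2] at hs
      show |s - x₀| ^ (-K - 1) = (s - x₀) ^ (-K - 1)
      rw [abs_of_pos (by linarith [hs.1] : (0:ℝ) < s - x₀)]
    rw [intervalIntegral.integral_congr hcongr]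
    rw [intervalIntegral.integral_comp_sub_right (fun y => y ^ (-K - 1)) x₀]
    rw [integral_rpow (Or.inr ⟨by intro h; apply hKpos.ne'; linarith,
      by rw [Set.uIcc_of_le (by linarith [ht.2] : t - x₀ ≤ 1 - x₀)]
         simp only [Set.mem_Icc, not_and, not_le]
         intro h; linarith⟩)]
    have he : (-K - 1 + 1 : ℝ) = -K := by ring
    rw [he, abs_of_pos ht0, hc₁]
    field_simp [hKpos.ne']
    ring
  have hI : (∫ s in Set.Ioc x 1, w s) = ((x - x₀) ^ (-K) - c₁) / K := by
    have h := Wfun x ⟨le_rfl, hx2⟩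
    rwa [abs_of_pos hxpos] at h
  have hinner : (∫ t in Set.Ioc x 1, deriv a t * (∫ s in Set.Ioc t 1, w s))
      = ∫ t in Set.Ioc x 1, deriv a t * ((|t - x₀| ^ (-K) - c₁) / K) := by
    refine setIntegral_congr_fun measurableSet_Ioc ?_
    intro t ht
    show deriv a t * (∫ s in Set.Ioc t 1, w s)
        = deriv a t * ((|t - x₀| ^ (-K) - c₁) / K)
    rw [Wfun t (Set.Ioc_subset_Icc_self ht)]
  have hg1int : IntegrableOn (fun t => deriv a t * ((|t - x₀| ^ (-K) - c₁) / K))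
      (Set.Ioc x 1) := by
    refine Integrable.mono' (g := fun t => |deriv a t| * (((x - x₀) ^ (-K) + c₁) / K))
      (hint'.abs.mul_const _) ?_ ?_
    · have hmP : Measurable (fun t : ℝ => |t - x₀| ^ (-K)) := meas_abs_rpow x₀ (-K)
      exact ((measurable_deriv a).mul
        ((hmP.sub measurable_const).div_const K)).aestronglyMeasurable.restrict
    · filter_upwards [ae_restrict_mem measurableSet_Ioc] with t ht
      have ht0 : (0:ℝ) < t - x₀ := by linarith [ht.1]
      have h1 : |t - x₀| ^ (-K) ≤ (x - x₀) ^ (-K) := by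
        rw [abs_of_pos ht0]
        exact Real.rpow_le_rpow_of_nonpos hxpos (by linarith [ht.1]) (by linarith)
      have h2 : (0:ℝ) ≤ |t - x₀| ^ (-K) := Real.rpow_nonneg (abs_nonneg _) _
      have h3 : |(|t - x₀| ^ (-K) - c₁) / K| ≤ ((x - x₀) ^ (-K) + c₁) / K := by
        rw [abs_div, abs_of_pos hKpos]
        gcongr
        exact abs_le.mpr ⟨by linarith, by linarith⟩
      calc ‖deriv a t * ((|t - x₀| ^ (-K) - c₁) / K)‖
          = |deriv a t| * |(|t - x₀| ^ (-K) - c₁) / K| := by rw [Real.norm_eq_abs, abs_mul]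
        _ ≤ |deriv a t| * (((x - x₀) ^ (-K) + c₁) / K) :=
            mul_le_mul_of_nonneg_left h3 (abs_nonneg _)
  have hg2int : IntegrableOn (fun t => a t * w t - c₁ / K * deriv a t) (Set.Ioc x 1) :=
    hfw.sub (hint'.const_mul _)
  have hsub2 : Set.Ioc x 1 ⊆ Set.Icc (0:ℝ) 1 :=
    fun t ht => ⟨le_of_lt (lt_trans hx0lt ht.1), ht.2⟩
  have haeIoc : ∀ᵐ t ∂(volume.restrict (Set.Ioc x 1)), (t - x₀) * deriv a t ≤ K * a t :=
    ae_restrict_of_ae_restrict_of_subset hsub2 hae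
  have hptwise : (fun t => deriv a t * ((|t - x₀| ^ (-K) - c₁) / K))
      ≤ᵐ[volume.restrict (Set.Ioc x 1)] fun t => a t * w t - c₁ / K * deriv a t := by
    filter_upwards [haeIoc, ae_restrict_mem measurableSet_Ioc] with t h1 h2
    have ht0 : (0:ℝ) < t - x₀ := by linarith [h2.1]
    have hPa : |t - x₀| = t - x₀ := abs_of_pos ht0
    have hwt : w t = (t - x₀) ^ (-K) / (t - x₀) := by
      show |t - x₀| ^ (-K - 1) = (t - x₀) ^ (-K) / (t - x₀)
      rw [hPa, Real.rpow_sub ht0, Real.rpow_one]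
    have hP : (0:ℝ) ≤ (t - x₀) ^ (-K) := Real.rpow_nonneg ht0.le _
    have h4 : deriv a t * (t - x₀) ^ (-K) / K ≤ a t * (t - x₀) ^ (-K) / (t - x₀) := by
      rw [div_le_div_iff₀ hKpos ht0]
      nlinarith [mul_le_mul_of_nonneg_right h1 hP]
    show deriv a t * ((|t - x₀| ^ (-K) - c₁) / K) ≤ a t * w t - c₁ / K * deriv a t
    rw [hPa, hwt]
    have expand : deriv a t * (((t - x₀) ^ (-K) - c₁) / K)
        = deriv a t * (t - x₀) ^ (-K) / K - c₁ / K * deriv a t := by ring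
    have expand2 : a t * ((t - x₀) ^ (-K) / (t - x₀))
        = a t * (t - x₀) ^ (-K) / (t - x₀) := by ring
    rw [expand, expand2]
    linarith
  have hmono := integral_mono_ae hg1int hg2int hptwise
  have hsplit : (∫ t in Set.Ioc x 1, (a t * w t - c₁ / K * deriv a t))
      = (∫ s in Set.Ioc x 1, a s * w s) - c₁ / K * (a 1 - a x) := by
    rw [integral_sub hfw (hint'.const_mul _), integral_const_mul, ha1xEq]
  rw [hinner, hI] at hparts
  rw [hsplit] at hmono
  have hkey : c₁ / K * (a 1 - a x) ≤ a x * (((x - x₀) ^ (-K) - c₁) / K) := by linarith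
  have hkey2 : c₁ * a 1 ≤ a x * (x - x₀) ^ (-K) := by
    have hm := mul_le_mul_of_nonneg_right hkey hKpos.le
    have e1 : c₁ / K * (a 1 - a x) * K = c₁ * (a 1 - a x) := by field_simp
    have e2 : a x * (((x - x₀) ^ (-K) - c₁) / K) * K
        = a x * ((x - x₀) ^ (-K) - c₁) := by field_simp
    rw [e1, e2] at hm
    nlinarith
  have hQ : (0:ℝ) < (x - x₀) ^ K := Real.rpow_pos_of_pos hxpos _
  have hPQ : (x - x₀) ^ (-K) * (x - x₀) ^ K = 1 := by
    rw [← Real.rpow_add hxpos]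
    norm_num
  have hm2 := mul_le_mul_of_nonneg_right hkey2 hQ.le
  calc a 1 * (1 - x₀) ^ (-K) * (x - x₀) ^ K = c₁ * a 1 * (x - x₀) ^ K := by rw [hc₁]; ring
    _ ≤ a x * (x - x₀) ^ (-K) * (x - x₀) ^ K := hm2
    _ = a x * ((x - x₀) ^ (-K) * (x - x₀) ^ K) := by ring
    _ = a x := by rw [hPQ, mul_one]

lemma bound_left {a : ℝ → ℝ} {x₀ K : ℝ} (hx₀ : x₀ ∈ Set.Ioo (0:ℝ) 1) (hK : K ∈ Set.Ioo (0:ℝ) 1)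
    (hint : IntervalIntegrable (deriv a) volume 0 1)
    (hrep : ∀ y ∈ Set.Icc (0:ℝ) 1, a y = a 0 + ∫ t in (0:ℝ)..y, deriv a t)
    (hae : ∀ᵐ t ∂(volume.restrict (Set.Icc (0:ℝ) 1)), (t - x₀) * deriv a t ≤ K * a t)
    {x : ℝ} (hx1 : 0 ≤ x) (hx2 : x < x₀) :
    a 0 * x₀ ^ (-K) * (x₀ - x) ^ K ≤ a x := by
  have hKpos : 0 < K := hK.1
  have hxpos : (0:ℝ) < x₀ - x := by linarith
  have hxlt1 : x < 1 := lt_trans hx2 hx₀.2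
  set c₂ : ℝ := (x₀ - x) ^ (-K) with hc₂
  have hc₂nn : 0 ≤ c₂ := Real.rpow_nonneg hxpos.le _
  rcases eq_or_lt_of_le hx1 with rfl | hxgt
  · have : x₀ ^ (-K) * (x₀ - 0) ^ K = 1 := by
      rw [sub_zero, ← Real.rpow_add hx₀.1]
      norm_num
    exact le_of_eq (by rw [mul_assoc, this, mul_one])
  have hxmem : x ∈ Set.Icc (0:ℝ) 1 := ⟨hx1, hxlt1.le⟩
  set w : ℝ → ℝ := fun s => |s - x₀| ^ (-K - 1) with hw
  have hmw : Measurable w := meas_abs_rpow x₀ (-K - 1)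
  have hint' : IntegrableOn (deriv a) (Set.Ioc 0 x) := by
    have h0 : IntegrableOn (deriv a) (Set.Ioc 0 1) :=
      (intervalIntegrable_iff_integrableOn_Ioc_of_le (by norm_num)).mp hint
    exact h0.mono_set (Set.Ioc_subset_Ioc_right hxlt1.le)
  set M : ℝ := (x₀ - x) ^ (-K - 1) with hMdef
  have hM : 0 ≤ M := Real.rpow_nonneg hxpos.le _
  have hwb : ∀ s ∈ Set.Ioc 0 x, |w s| ≤ M := by
    intro s hs
    have hs0 : 0 < x₀ - s := by linarith [hs.2]
    have h1 : |s - x₀| = x₀ - s := by rw [abs_sub_comm]; exact abs_of_pos hs0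
    show abs (|s - x₀| ^ (-K - 1)) ≤ M
    rw [h1, abs_of_nonneg (Real.rpow_nonneg hs0.le _)]
    exact Real.rpow_le_rpow_of_nonpos hxpos (by linarith [hs.2]) (by linarith)
  set A : ℝ → ℝ := fun y => a 0 + ∫ t in (0:ℝ)..y, deriv a t with hA
  have hIccInt : IntegrableOn (deriv a) (Set.Icc 0 1) :=
    Iff.mpr integrableOn_Icc_iff_integrableOn_Ioc
      ((intervalIntegrable_iff_integrableOn_Ioc_of_le (by norm_num)).mp hint)
  have hAcont : ContinuousOn A (Set.Icc 0 1) := by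
    refine continuousOn_const.add ?_
    have := intervalIntegral.continuousOn_primitive_interval
      (a := (0:ℝ)) (b := (1:ℝ)) (f := deriv a) (μ := volume) ?_
    · rwa [Set.uIcc_of_le (by norm_num : (0:ℝ) ≤ 1)] at this
    · rwa [Set.uIcc_of_le (by norm_num : (0:ℝ) ≤ 1)]
  have haA : ∀ y ∈ Set.Icc (0:ℝ) 1, a y = A y := hrep
  have hwcont : ContinuousOn w (Set.Icc 0 x) := by
    refine ContinuousOn.rpow_const ?_ ?_
    · exact (continuous_abs.comp (continuous_id.sub continuous_const)).continuousOn
    · intro s hs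
      left
      have : 0 < x₀ - s := by linarith [hs.2]
      show |s - x₀| ≠ 0
      rw [abs_sub_comm]
      positivity
  have hIcc0x : Set.Icc (0:ℝ) x ⊆ Set.Icc (0:ℝ) 1 := Set.Icc_subset_Icc le_rfl hxlt1.le
  have hfw : IntegrableOn (fun s => a s * w s) (Set.Ioc 0 x) := by
    have h1 : IntegrableOn (fun s => A s * w s) (Set.Icc 0 x) :=
      ((hAcont.mono hIcc0x).mul hwcont).integrableOn_compact isCompact_Icc
    refine IntegrableOn.congr_fun (h1.mono_set Set.Ioc_subset_Icc_self) ?_ measurableSet_Ioc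
    intro s hs
    show A s * w s = a s * w s
    rw [haA s (hIcc0x (Set.Ioc_subset_Icc_self hs))]
  have hsubII : ∀ {p q : ℝ}, 0 ≤ p → p ≤ q → q ≤ 1 → IntervalIntegrable (deriv a) volume p q := by
    intro p q hp hpq hq
    refine hint.mono_set ?_
    rw [Set.uIcc_of_le (by norm_num : (0:ℝ) ≤ 1), Set.uIcc_of_le hpq]
    exact Set.Icc_subset_Icc hp hq
  have hf : ∀ s ∈ Set.Ioc (0:ℝ) x, a s = a 0 + ∫ t in Set.Ioc 0 s, deriv a t := by
    intro s hs
    have hsmem : s ∈ Set.Icc (0:ℝ) 1 := ⟨hs.1.le, le_trans hs.2 hxlt1.le⟩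
    have h1 := hrep s hsmem
    rwa [intervalIntegral.integral_of_le hs.1.le] at h1
  have ha0xEq : (∫ t in Set.Ioc (0:ℝ) x, deriv a t) = a x - a 0 := by
    have := hf x ⟨hxgt, le_rfl⟩; linarith
  have hparts := my_parts (f := a) hint' (measurable_deriv a) hmw hM hwb hfw hf
  have Wfun : ∀ t ∈ Set.Icc (0:ℝ) x, (∫ s in Set.Ioc t x, w s)
      = (c₂ - |t - x₀| ^ (-K)) / K := by
    intro t ht
    have ht0 : 0 < x₀ - t := by linarith [ht.2]
    rw [← intervalIntegral.integral_of_le ht.2]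
    have hcongr : Set.EqOn w (fun s => (x₀ - s) ^ (-K - 1)) (Set.uIcc t x) := by
      intro s hs
      rw [Set.uIcc_of_le ht.2] at hs
      show |s - x₀| ^ (-K - 1) = (x₀ - s) ^ (-K - 1)
      rw [abs_sub_comm, abs_of_pos (by linarith [hs.2] : (0:ℝ) < x₀ - s)]
    rw [intervalIntegral.integral_congr hcongr]
    rw [intervalIntegral.integral_comp_sub_left (fun y => y ^ (-K - 1)) x₀]
    rw [integral_rpow (Or.inr ⟨by intro h; apply hKpos.ne'; linarith,
      by rw [Set.uIcc_of_le (by linarith [ht.2] : x₀ - x ≤ x₀ - t)]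
         simp only [Set.mem_Icc, not_and, not_le]
         intro h; linarith⟩)]
    have he : (-K - 1 + 1 : ℝ) = -K := by ring
    rw [he, abs_sub_comm, abs_of_pos ht0, hc₂]
    field_simp [hKpos.ne']
    ring
  have hI : (∫ s in Set.Ioc (0:ℝ) x, w s) = (c₂ - x₀ ^ (-K)) / K := by
    have h := Wfun 0 ⟨le_rfl, hxgt.le⟩
    rw [h]
    congr 2
    rw [zero_sub, abs_neg, abs_of_pos hx₀.1]
  have hinner : (∫ t in Set.Ioc (0:ℝ) x, deriv a t * (∫ s in Set.Ioc t x, w s))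
      = ∫ t in Set.Ioc (0:ℝ) x, deriv a t * ((c₂ - |t - x₀| ^ (-K)) / K) := by
    refine setIntegral_congr_fun measurableSet_Ioc ?_
    intro t ht
    show deriv a t * (∫ s in Set.Ioc t x, w s)
        = deriv a t * ((c₂ - |t - x₀| ^ (-K)) / K)
    rw [Wfun t (Set.Ioc_subset_Icc_self ht)]
  have hg1int : IntegrableOn (fun t => deriv a t * ((c₂ - |t - x₀| ^ (-K)) / K))
      (Set.Ioc 0 x) := by
    refine Integrable.mono' (g := fun t => |deriv a t| * ((c₂ + (x₀ - x) ^ (-K)) / K))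
      (hint'.abs.mul_const _) ?_ ?_
    · have hmP : Measurable (fun t : ℝ => |t - x₀| ^ (-K)) := meas_abs_rpow x₀ (-K)
      exact ((measurable_deriv a).mul
        ((measurable_const.sub hmP).div_const K)).aestronglyMeasurable.restrict
    · filter_upwards [ae_restrict_mem measurableSet_Ioc] with t ht
      have ht0 : (0:ℝ) < x₀ - t := by linarith [ht.2]
      have h1 : |t - x₀| ^ (-K) ≤ (x₀ - x) ^ (-K) := by
        rw [abs_sub_comm, abs_of_pos ht0]
        exact Real.rpow_le_rpow_of_nonpos hxpos (by linarith [ht.2]) (by linarith)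
      have h2 : (0:ℝ) ≤ |t - x₀| ^ (-K) := Real.rpow_nonneg (abs_nonneg _) _
      have h3 : |(c₂ - |t - x₀| ^ (-K)) / K| ≤ ((c₂ + (x₀ - x) ^ (-K)) / K) := by
        rw [abs_div, abs_of_pos hKpos]
        gcongr
        exact abs_le.mpr ⟨by linarith, by linarith⟩
      calc ‖deriv a t * ((c₂ - |t - x₀| ^ (-K)) / K)‖
          = |deriv a t| * |(c₂ - |t - x₀| ^ (-K)) / K| := by rw [Real.norm_eq_abs, abs_mul]
        _ ≤ |deriv a t| * ((c₂ + (x₀ - x) ^ (-K)) / K) :=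
            mul_le_mul_of_nonneg_left h3 (abs_nonneg _)
  have hg2int : IntegrableOn (fun t => a t * w t + c₂ / K * deriv a t) (Set.Ioc 0 x) :=
    hfw.add (hint'.const_mul _)
  have hsub2 : Set.Ioc (0:ℝ) x ⊆ Set.Icc (0:ℝ) 1 :=
    fun t ht => ⟨ht.1.le, le_trans ht.2 hxlt1.le⟩
  have haeIoc : ∀ᵐ t ∂(volume.restrict (Set.Ioc (0:ℝ) x)),
      (t - x₀) * deriv a t ≤ K * a t :=
    ae_restrict_of_ae_restrict_of_subset hsub2 hae
  have hptwise : (fun t => deriv a t * ((c₂ - |t - x₀| ^ (-K)) / K))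
      ≤ᵐ[volume.restrict (Set.Ioc (0:ℝ) x)] fun t => a t * w t + c₂ / K * deriv a t := by
    filter_upwards [haeIoc, ae_restrict_mem measurableSet_Ioc] with t h1 h2
    have ht0 : (0:ℝ) < x₀ - t := by linarith [h2.2]
    have hPa : |t - x₀| = x₀ - t := by rw [abs_sub_comm]; exact abs_of_pos ht0
    have hwt : w t = (x₀ - t) ^ (-K) / (x₀ - t) := by
      show |t - x₀| ^ (-K - 1) = (x₀ - t) ^ (-K) / (x₀ - t)
      rw [hPa, Real.rpow_sub ht0, Real.rpow_one]
    have hP : (0:ℝ) ≤ (x₀ - t) ^ (-K) := Real.rpow_nonneg ht0.le _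
    have h4 : -(deriv a t * (x₀ - t) ^ (-K)) / K ≤ a t * (x₀ - t) ^ (-K) / (x₀ - t) := by
      rw [div_le_div_iff₀ hKpos ht0]
      nlinarith [mul_le_mul_of_nonneg_right h1 hP]
    show deriv a t * ((c₂ - |t - x₀| ^ (-K)) / K) ≤ a t * w t + c₂ / K * deriv a t
    rw [hPa, hwt]
    have expand : deriv a t * ((c₂ - (x₀ - t) ^ (-K)) / K)
        = -(deriv a t * (x₀ - t) ^ (-K)) / K + c₂ / K * deriv a t := by ring
    have expand2 : a t * ((x₀ - t) ^ (-K) / (x₀ - t))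
        = a t * (x₀ - t) ^ (-K) / (x₀ - t) := by ring
    rw [expand, expand2]
    linarith
  have hmono := integral_mono_ae hg1int hg2int hptwise
  have hsplit : (∫ t in Set.Ioc (0:ℝ) x, (a t * w t + c₂ / K * deriv a t))
      = (∫ s in Set.Ioc (0:ℝ) x, a s * w s) + c₂ / K * (a x - a 0) := by
    rw [integral_add hfw (hint'.const_mul _), integral_const_mul, ha0xEq]
  rw [hinner, hI] at hparts
  rw [hsplit] at hmono
  have hkey : 0 ≤ a 0 * ((c₂ - x₀ ^ (-K)) / K) + c₂ / K * (a x - a 0) := by linarith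
  have hkey2 : a 0 * x₀ ^ (-K) ≤ a x * c₂ := by
    have hm := mul_le_mul_of_nonneg_right hkey hKpos.le
    rw [zero_mul] at hm
    have e1 : (a 0 * ((c₂ - x₀ ^ (-K)) / K) + c₂ / K * (a x - a 0)) * K
        = a 0 * (c₂ - x₀ ^ (-K)) + c₂ * (a x - a 0) := by field_simp
    rw [e1] at hm
    nlinarith
  have hQ : (0:ℝ) < (x₀ - x) ^ K := Real.rpow_pos_of_pos hxpos _
  have hPQ : (x₀ - x) ^ (-K) * (x₀ - x) ^ K = 1 := by
    rw [← Real.rpow_add hxpos]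
    norm_num
  have hm2 := mul_le_mul_of_nonneg_right hkey2 hQ.le
  calc a 0 * x₀ ^ (-K) * (x₀ - x) ^ K ≤ a x * c₂ * (x₀ - x) ^ K := hm2
    _ = a x * ((x₀ - x) ^ (-K) * (x₀ - x) ^ K) := by rw [hc₂]; ring
    _ = a x := by rw [hPQ, mul_one]

lemma int_gK {x₀ K : ℝ} (hx₀ : x₀ ∈ Set.Ioo (0:ℝ) 1) (hK : K ∈ Set.Ioo (0:ℝ) 1) :
    IntegrableOn (fun x => |x - x₀| ^ (-K)) (Set.Ioo (0:ℝ) 1) := by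
  have hKn : (-1:ℝ) < -K := by linarith [hK.2]
  -- right piece
  have hr0 : IntervalIntegrable (fun y : ℝ => y ^ (-K)) volume 0 (1 - x₀) :=
    intervalIntegral.intervalIntegrable_rpow' hKn
  have hr1 := hr0.comp_sub_right x₀
  rw [zero_add, sub_add_cancel] at hr1
  have hr2 : IntegrableOn (fun x : ℝ => (x - x₀) ^ (-K)) (Set.Ioc x₀ 1) :=
    (intervalIntegrable_iff_integrableOn_Ioc_of_le hx₀.2.le).mp hr1
  have hr3 : IntegrableOn (fun x => |x - x₀| ^ (-K)) (Set.Ioc x₀ 1) := by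
    refine hr2.congr_fun ?_ measurableSet_Ioc
    intro s hs
    show (s - x₀) ^ (-K) = |s - x₀| ^ (-K)
    rw [abs_of_pos (by linarith [hs.1] : (0:ℝ) < s - x₀)]
  -- left piece
  have hl0 : IntervalIntegrable (fun y : ℝ => y ^ (-K)) volume (x₀ - 0) (x₀ - x₀) :=
    intervalIntegral.intervalIntegrable_rpow' hKn
  have hl1 := (intervalIntegral.intervalIntegrable_rpow' (a := x₀ - 0) (b := x₀ - x₀)
    hKn).comp_sub_left x₀
  have he1 : x₀ - (x₀ - 0) = 0 := by ring
  have he2 : x₀ - (x₀ - x₀) = x₀ := by ring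
  rw [he1, he2] at hl1
  have hl2 : IntegrableOn (fun x : ℝ => (x₀ - x) ^ (-K)) (Set.Ioc 0 x₀) :=
    (intervalIntegrable_iff_integrableOn_Ioc_of_le hx₀.1.le).mp hl1
  have hl3 : IntegrableOn (fun x => |x - x₀| ^ (-K)) (Set.Ioc 0 x₀) := by
    refine hl2.congr_fun ?_ measurableSet_Ioc
    intro s hs
    show (x₀ - s) ^ (-K) = |s - x₀| ^ (-K)
    rcases eq_or_lt_of_le hs.2 with rfl | h
    · norm_num
    · rw [abs_sub_comm, abs_of_pos (by linarith : (0:ℝ) < x₀ - s)]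
  exact (hl3.union hr3).mono_set (fun z hz => by
    rcases le_or_gt z x₀ with h | h
    · exact Or.inl ⟨hz.1, h⟩
    · exact Or.inr ⟨h, hz.2.le⟩)

set_option maxHeartbeats 1000000 in
/-- In the weakly degenerate case `H¹_{1/a}(0,1) = H¹(0,1)` with equivalent norms. -/
theorem statement7 (a : ℝ → ℝ) (x₀ : ℝ) (ha : ∃ K, WeaklyDeg a x₀ K) :
    (∀ u : ℝ → ℝ, MemH1 u → IntegrableOn (fun x => (u x)^2 / a x) (Ioo 0 1)) ∧
    ∃ C : ℝ, 1 ≤ C ∧ ∀ u : ℝ → ℝ, MemH1 u →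
      ((1/C) * ((∫ x in Ioo (0:ℝ) 1, (u x)^2) + ∫ x in Ioo (0:ℝ) 1, (deriv u x)^2)
        ≤ (∫ x in Ioo (0:ℝ) 1, (u x)^2 / a x) + ∫ x in Ioo (0:ℝ) 1, (deriv u x)^2) ∧
      ((∫ x in Ioo (0:ℝ) 1, (u x)^2 / a x) + (∫ x in Ioo (0:ℝ) 1, (deriv u x)^2)
        ≤ C * ((∫ x in Ioo (0:ℝ) 1, (u x)^2) + ∫ x in Ioo (0:ℝ) 1, (deriv u x)^2)) := by
  obtain ⟨K, hWD⟩ := ha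
  have hDeg := hWD.1
  have hW11 := hWD.2.1
  have hK : K ∈ Set.Ioo (0:ℝ) 1 := hWD.2.2
  have hx₀ : x₀ ∈ Set.Ioo (0:ℝ) 1 := hDeg.1
  have hax₀ : a x₀ = 0 := hDeg.2.1
  have hpos : ∀ x ∈ Set.Icc (0:ℝ) 1, x ≠ x₀ → 0 < a x := hDeg.2.2.1
  have hae : ∀ᵐ x ∂(volume.restrict (Set.Icc (0:ℝ) 1)), (x - x₀) * deriv a x ≤ K * a x :=
    hDeg.2.2.2
  have hint : IntervalIntegrable (deriv a) volume 0 1 := hW11.1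
  have hrep : ∀ y ∈ Set.Icc (0:ℝ) 1, a y = a 0 + ∫ t in (0:ℝ)..y, deriv a t := hW11.2
  have hKpos : 0 < K := hK.1
  have ha0 : 0 < a 0 := hpos 0 ⟨le_rfl, zero_le_one⟩ (ne_of_lt hx₀.1)
  have ha1 : 0 < a 1 := hpos 1 ⟨zero_le_one, le_rfl⟩ (ne_of_gt hx₀.2)
  set m : ℝ := min (a 0 * x₀ ^ (-K)) (a 1 * (1 - x₀) ^ (-K)) with hm
  have hmpos : 0 < m := lt_min (mul_pos ha0 (Real.rpow_pos_of_pos hx₀.1 _))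
      (mul_pos ha1 (Real.rpow_pos_of_pos (by linarith [hx₀.2]) _))
  have hlow : ∀ x ∈ Set.Icc (0:ℝ) 1, m * |x - x₀| ^ K ≤ a x := by
    intro x hx
    rcases lt_trichotomy x x₀ with h | rfl | h
    · have hb := bound_left hx₀ hK hint hrep hae hx.1 h
      rw [abs_sub_comm, abs_of_pos (by linarith : (0:ℝ) < x₀ - x)]
      have h1 : m * (x₀ - x) ^ K ≤ a 0 * x₀ ^ (-K) * (x₀ - x) ^ K :=
        mul_le_mul_of_nonneg_right (min_le_left _ _) (Real.rpow_nonneg (by linarith) _)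
      linarith
    · rw [hax₀, sub_self, abs_zero, Real.zero_rpow hKpos.ne', mul_zero]
    · have hb := bound_right hx₀ hK hint hrep hae h hx.2
      rw [abs_of_pos (by linarith : (0:ℝ) < x - x₀)]
      have h1 : m * (x - x₀) ^ K ≤ a 1 * (1 - x₀) ^ (-K) * (x - x₀) ^ K :=
        mul_le_mul_of_nonneg_right (min_le_right _ _) (Real.rpow_nonneg (by linarith) _)
      linarith
  have hanneg : ∀ x ∈ Set.Icc (0:ℝ) 1, 0 ≤ a x := fun x hx =>
    le_trans (by positivity) (hlow x hx)
  set Ma : ℝ := a 0 + ∫ t in (0:ℝ)..1, |deriv a t| with hMa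
  have hbnd : ∀ x ∈ Set.Icc (0:ℝ) 1, a x ≤ Ma := by
    intro x hx
    rw [hrep x hx]
    have h1 : (∫ t in (0:ℝ)..x, deriv a t) ≤ |∫ t in (0:ℝ)..x, deriv a t| := le_abs_self _
    have h2 : |∫ t in (0:ℝ)..x, deriv a t| ≤ ∫ t in (0:ℝ)..x, |deriv a t| :=
      intervalIntegral.abs_integral_le_integral_abs hx.1
    have h3 : (∫ t in (0:ℝ)..x, |deriv a t|) ≤ ∫ t in (0:ℝ)..1, |deriv a t| := by
      refine intervalIntegral.integral_mono_interval le_rfl hx.1 hx.2 ?_ hint.abs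
      filter_upwards with t using abs_nonneg _
    rw [hMa]
    linarith
  have hMapos : 0 < Ma := lt_of_lt_of_le ha1 (hbnd 1 ⟨zero_le_one, le_rfl⟩)
  have hgint : IntegrableOn (fun x => |x - x₀| ^ (-K)) (Set.Ioo (0:ℝ) 1) := int_gK hx₀ hK
  set Ainf : ℝ := ∫ x in Set.Ioo (0:ℝ) 1, |x - x₀| ^ (-K) with hAinf
  have hAinf0 : 0 ≤ Ainf := setIntegral_nonneg measurableSet_Ioo
    (fun x _ => Real.rpow_nonneg (abs_nonneg _) _)
  set C : ℝ := max (2 * Ainf / m + 1) (max Ma 1) with hC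
  have hC1 : (1:ℝ) ≤ C := le_trans (le_max_right _ _) (le_max_right _ _)
  have hCpos : 0 < C := lt_of_lt_of_le one_pos hC1
  have hne : ∀ᵐ x ∂(volume.restrict (Set.Ioo (0:ℝ) 1)), x ≠ x₀ := by
    refine ae_restrict_of_ae ?_
    rw [MeasureTheory.ae_iff]
    have hset : {x : ℝ | ¬ x ≠ x₀} = {x₀} := by ext z; simp
    rw [hset]
    exact measure_singleton x₀
  have key : ∀ u : ℝ → ℝ, MemH1 u →
      IntegrableOn (fun x => (u x)^2 / a x) (Set.Ioo (0:ℝ) 1) ∧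
      ((1/C) * ((∫ x in Set.Ioo (0:ℝ) 1, (u x)^2) + ∫ x in Set.Ioo (0:ℝ) 1, (deriv u x)^2)
        ≤ (∫ x in Set.Ioo (0:ℝ) 1, (u x)^2 / a x) + ∫ x in Set.Ioo (0:ℝ) 1, (deriv u x)^2) ∧
      ((∫ x in Set.Ioo (0:ℝ) 1, (u x)^2 / a x) + (∫ x in Set.Ioo (0:ℝ) 1, (deriv u x)^2)
        ≤ C * ((∫ x in Set.Ioo (0:ℝ) 1, (u x)^2) + ∫ x in Set.Ioo (0:ℝ) 1, (deriv u x)^2)) := by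
    intro u hu
    have huint : IntervalIntegrable (deriv u) volume 0 1 := hu.1.1
    have hurep : ∀ y ∈ Set.Icc (0:ℝ) 1, u y = u 0 + ∫ t in (0:ℝ)..y, deriv u t := hu.1.2
    have hu2 : IntegrableOn (fun x => (u x)^2) (Set.Ioo (0:ℝ) 1) := hu.2.1
    have hu3 : IntegrableOn (fun x => (deriv u x)^2) (Set.Ioo (0:ℝ) 1) := hu.2.2
    set I1 := ∫ x in Set.Ioo (0:ℝ) 1, (u x)^2 with hI1
    set I2 := ∫ x in Set.Ioo (0:ℝ) 1, (deriv u x)^2 with hI2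
    have hI1nn : 0 ≤ I1 := setIntegral_nonneg measurableSet_Ioo (fun x _ => sq_nonneg _)
    have hI2nn : 0 ≤ I2 := setIntegral_nonneg measurableSet_Ioo (fun x _ => sq_nonneg _)
    set D : ℝ := ∫ t in (0:ℝ)..1, |deriv u t| with hD
    have hD0 : 0 ≤ D :=
      intervalIntegral.integral_nonneg zero_le_one (fun t _ => abs_nonneg _)
    have husubII : ∀ {p q : ℝ}, 0 ≤ p → p ≤ q → q ≤ 1 →
        IntervalIntegrable (deriv u) volume p q := by
      intro p q hp hpq hq
      refine huint.mono_set ?_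
      rw [Set.uIcc_of_le (by norm_num : (0:ℝ) ≤ 1), Set.uIcc_of_le hpq]
      exact Set.Icc_subset_Icc hp hq
    have husub : ∀ x ∈ Set.Icc (0:ℝ) 1, ∀ y ∈ Set.Icc (0:ℝ) 1, |u x - u y| ≤ D := by
      intro x hx y hy
      have hxy : u x - u y = ∫ t in y..x, deriv u t := by
        have h1 := hurep x hx
        have h2 := hurep y hy
        have h3 : (∫ t in (0:ℝ)..x, deriv u t) - (∫ t in (0:ℝ)..y, deriv u t)
            = ∫ t in y..x, deriv u t :=
          intervalIntegral.integral_interval_sub_left (husubII le_rfl hx.1 hx.2)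
            (husubII le_rfl hy.1 hy.2)
        linarith
      rw [hxy]
      have hn := intervalIntegral.norm_integral_le_abs_integral_norm
        (f := deriv u) (a := y) (b := x) (μ := volume)
      simp only [Real.norm_eq_abs] at hn
      refine le_trans hn ?_
      have hmono := intervalIntegral.abs_integral_mono_interval
        (a := y) (b := x) (c := (0:ℝ)) (d := 1) ?_ ?_ huint.abs
      · refine le_trans hmono (le_of_eq (abs_of_nonneg hD0))
      · intro z hz
        rw [Set.mem_uIoc] at hz
        rw [Set.uIoc_of_le zero_le_one, Set.mem_Ioc]
        rcases hz with ⟨h1, h2⟩ | ⟨h1, h2⟩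
        · exact ⟨lt_of_le_of_lt hy.1 h1, le_trans h2 hx.2⟩
        · exact ⟨lt_of_le_of_lt hx.1 h1, le_trans h2 hy.2⟩
      · filter_upwards with t using abs_nonneg _
    have habsint : IntegrableOn (fun t => |deriv u t|) (Set.Ioo (0:ℝ) 1) := by
      have h := (intervalIntegrable_iff_integrableOn_Ioc_of_le zero_le_one).mp huint.abs
      exact h.mono_set Set.Ioo_subset_Ioc_self
    have hDIoo : D = ∫ t in Set.Ioo (0:ℝ) 1, |deriv u t| := by
      rw [hD, intervalIntegral.integral_of_le zero_le_one, integral_Ioc_eq_integral_Ioo]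
    have hvol : (volume (Set.Ioo (0:ℝ) 1)).toReal = 1 := by
      rw [Real.volume_Ioo]
      norm_num
    have hD2 : D^2 ≤ I2 := by
      have hnn : 0 ≤ ∫ t in Set.Ioo (0:ℝ) 1, (|deriv u t| - D)^2 :=
        setIntegral_nonneg measurableSet_Ioo (fun t _ => sq_nonneg _)
      have hfun : ∀ t : ℝ, (|deriv u t| - D)^2
          = ((deriv u t)^2 - 2*D*|deriv u t|) + D^2 := by
        intro t
        calc (|deriv u t| - D)^2 = |deriv u t|^2 - 2*D*|deriv u t| + D^2 := by ring
          _ = ((deriv u t)^2 - 2*D*|deriv u t|) + D^2 := by rw [sq_abs]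
      have hexp : (∫ t in Set.Ioo (0:ℝ) 1, (|deriv u t| - D)^2) = I2 - 2*D*D + D^2 := by
        simp_rw [hfun]
        have hsubint : IntegrableOn (fun t => (deriv u t)^2 - 2*D*|deriv u t|)
            (Set.Ioo (0:ℝ) 1) := hu3.sub (habsint.const_mul (2*D))
        rw [integral_add hsubint (integrable_const _)]
        rw [integral_sub hu3 (habsint.const_mul (2*D))]
        rw [integral_const_mul, setIntegral_const, measureReal_def, hvol, smul_eq_mul, one_mul, ← hDIoo, ← hI2]
      rw [hexp] at hnn
      nlinarith
    set S : ℝ := 2*I1 + 2*I2 with hS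
    have hSnn : 0 ≤ S := by rw [hS]; linarith
    have hsup : ∀ x ∈ Set.Icc (0:ℝ) 1, (u x)^2 ≤ S := by
      intro x hx
      have hptw : ∀ y ∈ Set.Ioo (0:ℝ) 1, (u x)^2 - 2*D^2 ≤ 2*(u y)^2 := by
        intro y hy
        have h1 := husub x hx y (Set.Ioo_subset_Icc_self hy)
        have h2 : |u x| ≤ |u y| + D := by
          have h3 := abs_sub_abs_le_abs_sub (u x) (u y)
          linarith
        nlinarith [sq_nonneg (|u y| - D), sq_abs (u x), sq_abs (u y), abs_nonneg (u x),
          abs_nonneg (u y)]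
      have hconst : IntegrableOn (fun _ : ℝ => (u x)^2 - 2*D^2) (Set.Ioo (0:ℝ) 1) :=
        integrableOn_const (by rw [Real.volume_Ioo]; exact ENNReal.ofReal_ne_top)
      have hmono2 := setIntegral_mono_on hconst (hu2.const_mul 2) measurableSet_Ioo hptw
      rw [setIntegral_const, measureReal_def, hvol, smul_eq_mul, one_mul, integral_const_mul, ← hI1] at hmono2
      rw [hS]
      linarith
    have haesm : AEStronglyMeasurable (fun x => (u x)^2 / a x)
        (volume.restrict (Set.Ioo (0:ℝ) 1)) := by
      set U : ℝ → ℝ := fun y => u 0 + ∫ t in (0:ℝ)..y, deriv u t with hU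
      set B : ℝ → ℝ := fun y => a 0 + ∫ t in (0:ℝ)..y, deriv a t with hB
      have hUc : ContinuousOn U (Set.Icc 0 1) := by
        refine continuousOn_const.add ?_
        have h := intervalIntegral.continuousOn_primitive_interval (a := (0:ℝ)) (b := 1)
          (f := deriv u) (μ := volume) (by
            rw [Set.uIcc_of_le (zero_le_one : (0:ℝ) ≤ 1)]
            exact Iff.mpr integrableOn_Icc_iff_integrableOn_Ioc
              ((intervalIntegrable_iff_integrableOn_Ioc_of_le zero_le_one).mp huint))
        rwa [Set.uIcc_of_le (zero_le_one : (0:ℝ) ≤ 1)] at h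
      have hBc : ContinuousOn B (Set.Icc 0 1) := by
        refine continuousOn_const.add ?_
        have h := intervalIntegral.continuousOn_primitive_interval (a := (0:ℝ)) (b := 1)
          (f := deriv a) (μ := volume) (by
            rw [Set.uIcc_of_le (zero_le_one : (0:ℝ) ≤ 1)]
            exact Iff.mpr integrableOn_Icc_iff_integrableOn_Ioc
              ((intervalIntegrable_iff_integrableOn_Ioc_of_le zero_le_one).mp hint))
        rwa [Set.uIcc_of_le (zero_le_one : (0:ℝ) ≤ 1)] at h
      have hUm : AEMeasurable U (volume.restrict (Set.Ioo (0:ℝ) 1)) :=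
        (hUc.mono Set.Ioo_subset_Icc_self).aemeasurable measurableSet_Ioo
      have hBm : AEMeasurable B (volume.restrict (Set.Ioo (0:ℝ) 1)) :=
        (hBc.mono Set.Ioo_subset_Icc_self).aemeasurable measurableSet_Ioo
      have hmm : AEMeasurable (fun x => U x * U x / B x)
          (volume.restrict (Set.Ioo (0:ℝ) 1)) := (hUm.mul hUm).div hBm
      refine AEStronglyMeasurable.congr hmm.aestronglyMeasurable ?_
      filter_upwards [ae_restrict_mem measurableSet_Ioo] with x hx
      have hxI : x ∈ Set.Icc (0:ℝ) 1 := Set.Ioo_subset_Icc_self hx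
      show (u 0 + ∫ t in (0:ℝ)..x, deriv u t) * (u 0 + ∫ t in (0:ℝ)..x, deriv u t)
          / (a 0 + ∫ t in (0:ℝ)..x, deriv a t) = (u x)^2 / a x
      rw [← hurep x hxI, ← hrep x hxI, sq]
    have hqbound : ∀ᵐ x ∂(volume.restrict (Set.Ioo (0:ℝ) 1)),
        ‖(u x)^2 / a x‖ ≤ S/m * |x - x₀| ^ (-K) := by
      filter_upwards [ae_restrict_mem measurableSet_Ioo] with x hx
      have hxI : x ∈ Set.Icc (0:ℝ) 1 := Set.Ioo_subset_Icc_self hx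
      rcases eq_or_ne x x₀ with rfl | hxe
      · rw [hax₀, div_zero, norm_zero]
        positivity
      · have hPpos : 0 < |x - x₀| ^ K :=
          Real.rpow_pos_of_pos (abs_pos.mpr (sub_ne_zero.mpr hxe)) _
        have hax : 0 < a x := hpos x hxI hxe
        have h1 : (u x)^2 / a x ≤ S / (m * |x - x₀| ^ K) :=
          div_le_div₀ hSnn (hsup x hxI) (by positivity) (hlow x hxI)
        have h2 : S / (m * |x - x₀| ^ K) = S/m * |x - x₀| ^ (-K) := by
          rw [Real.rpow_neg (abs_nonneg _), div_mul_eq_div_div, div_eq_mul_inv (S/m)]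
        rw [Real.norm_eq_abs, abs_of_nonneg (div_nonneg (sq_nonneg _) hax.le)]
        rw [← h2]
        exact h1
    have hqint : IntegrableOn (fun x => (u x)^2 / a x) (Set.Ioo (0:ℝ) 1) :=
      Integrable.mono' (hgint.const_mul (S/m)) haesm hqbound
    set Iq := ∫ x in Set.Ioo (0:ℝ) 1, (u x)^2 / a x with hIq
    have hIqnn : 0 ≤ Iq := setIntegral_nonneg measurableSet_Ioo
      (fun x hx => div_nonneg (sq_nonneg _) (hanneg x (Set.Ioo_subset_Icc_self hx)))
    have hup : Iq ≤ S/m * Ainf := by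
      have hmono3 := integral_mono_ae hqint (hgint.const_mul (S/m)) ?_
      · rwa [integral_const_mul] at hmono3
      · filter_upwards [hqbound] with x hx
        refine le_trans (le_abs_self _) ?_
        rw [← Real.norm_eq_abs]
        exact hx
    have hlow2 : I1 ≤ Ma * Iq := by
      have hmono4 := integral_mono_ae hu2 (hqint.const_mul Ma) ?_
      · rwa [integral_const_mul] at hmono4
      · filter_upwards [hne, ae_restrict_mem measurableSet_Ioo] with x hxne hx
        have hxI : x ∈ Set.Icc (0:ℝ) 1 := Set.Ioo_subset_Icc_self hx
        have hax : 0 < a x := hpos x hxI hxne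
        have heq : (u x)^2 = (u x)^2 / a x * a x := by field_simp
        calc (u x)^2 = (u x)^2 / a x * a x := heq
          _ ≤ (u x)^2 / a x * Ma :=
            mul_le_mul_of_nonneg_left (hbnd x hxI) (div_nonneg (sq_nonneg _) hax.le)
          _ = Ma * ((u x)^2 / a x) := mul_comm _ _
    refine ⟨hqint, ?_, ?_⟩
    · have hMaC : Ma ≤ C := le_trans (le_max_left _ _) (le_max_right _ _)
      have hstep : I1 + I2 ≤ C * (Iq + I2) := by
        have hh1 : Ma * Iq ≤ C * Iq := mul_le_mul_of_nonneg_right hMaC hIqnn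
        have hh2 : 1 * I2 ≤ C * I2 := mul_le_mul_of_nonneg_right hC1 hI2nn
        have hexpand : C * (Iq + I2) = C * Iq + C * I2 := by ring
        rw [hexpand]
        linarith
      rw [one_div, inv_mul_le_iff₀ hCpos]
      linarith
    · have h2AC : 2 * Ainf / m + 1 ≤ C := le_max_left _ _
      have e : S/m * Ainf = (2*Ainf/m) * I1 + (2*Ainf/m) * I2 := by
        rw [hS]
        field_simp
      have hexpand2 : (2*Ainf/m + 1) * (I1 + I2)
          = (2*Ainf/m) * I1 + (2*Ainf/m) * I2 + I1 + I2 := by ring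
      have hfin : Iq + I2 ≤ (2*Ainf/m + 1) * (I1 + I2) := by
        rw [hexpand2]
        linarith
      have hlast : (2*Ainf/m + 1) * (I1 + I2) ≤ C * (I1 + I2) :=
        mul_le_mul_of_nonneg_right h2AC (by linarith)
      linarith
  exact ⟨fun u hu => (key u hu).1, C, hC1, fun u hu => ⟨(key u hu).2.1, (key u hu).2.2⟩⟩
end
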